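/- arXiv:2506.13061 — 3 statements merged into one kernel-verified Lean document; each statement's English description precedes it below -/
import Mathlib

section
/- Let the stages k̃_1, …, k̃_s be defined recursively by k̃_1(x) = V̂_{t+c_1H}(x) and k̃_j(x) = V̂_{t+c_jH}(x + H Σ_{k<j} a_{jk} k̃_k(x)), where each field V̂_u is C² with ‖∇V̂_u(x)‖_∞ ≤ K̃⁽¹⁾ and ‖∇²V̂_u(x)‖_∞ ≤ K̃⁽²⁾ for all x, and max|a_{jk}| ≤ A_p, max|b_j| ≤ B_p. Then for all x ∈ ℝ^d: Σ_{i=1}^s ‖∇k̃_i(x)‖_∞ ≤ s K̃⁽¹⁾ (1 + K̃⁽¹⁾ A_p H d)^{s−1} and Σ_{i=1}^s ‖∇²k̃_i(x)‖_∞ ≤ 2 K̃⁽²⁾ s³ (1 + K̃⁽¹⁾ A_p H d)^{2s}. Consequently, φ̃_H(x) := x + H Σ_j b_j k̃_j(x) satisfies sup_x ‖∇²φ̃_H(x)‖_∞ ≤ 2 H B_p K̃⁽²⁾ s³ (1 + K̃⁽¹⁾ A_p H d)^{2s}. Moreover, if K̃⁽¹⁾ A_p H d s 2^s ≤ 1,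 then ‖∇k̃_i(x)‖_∞ ≤ 2 K̃⁽¹⁾ for every i ∈ {1,…,s}. The same statements hold for stages k̄_i built from fields V_u with ‖∇V_u‖_∞ ≤ K̄⁽¹⁾ and ‖∇²V_u‖_∞ ≤ K̄⁽²⁾, with K̄ in place of K̃. -/
/-- Euclidean space ℝ^d. -/
abbrev E (d : ℕ) := EuclideanSpace ℝ (Fin d)

/-- Entry `(l,q)` of the Jacobian of `F` at `x`, i.e. `∂_l F^{(q)}(x)`. -/
noncomputable def jacEntry {d : ℕ} (F : E d → E d) (x : E d) (l q : Fin d) : ℝ :=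
  fderiv ℝ F x (EuclideanSpace.single l 1) q

/-- Entry `(l,r,q)` of the second derivative of `F` at `x`, i.e. `∂²_{lr} F^{(q)}(x)`. -/
noncomputable def jac2Entry {d : ℕ} (F : E d → E d) (x : E d) (l r q : Fin d) : ℝ :=
  fderiv ℝ (fun y => jacEntry F y l q) x (EuclideanSpace.single r 1)

/-- `‖∇F(x)‖_∞`: the maximum entry of the Jacobian of `F` at `x`. -/
noncomputable def jacSup {d : ℕ} (F : E d → E d) (x : E d) : ℝ :=
  ⨆ l, ⨆ q, |jacEntry F x l q|

/-- `‖∇²F(x)‖_∞`: the maximum entry of the second derivative of `F` at `x`. -/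
noncomputable def jac2Sup {d : ℕ} (F : E d → E d) (x : E d) : ℝ :=
  ⨆ l, ⨆ r, ⨆ q, |jac2Entry F x l r q|

/-- The recursively defined Runge–Kutta stages:
`k_0(x) = V_0(x)`, `k_j(x) = V_j(x + H Σ_{k<j} a_{jk} k_k(x))`. -/
noncomputable def rkStage {d : ℕ} (V : ℕ → E d → E d) (a : ℕ → ℕ → ℝ) (H : ℝ) :
    ℕ → E d → E d
  | j => fun x => V j (x + H • ∑ k : Fin j, a j k • rkStage V a H k x)
termination_by j => j
decreasing_by exact k.isLt

namespace Stmt9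
open Finset

variable {d : ℕ}

lemma euclid_decomp (v : E d) : v = ∑ m, v m • EuclideanSpace.single m (1:ℝ) := by
  ext i
  rw [WithLp.ofLp_sum, Finset.sum_apply]
  simp [EuclideanSpace.single_apply]

lemma clm_apply_coord (L : E d →L[ℝ] E d) (v : E d) (q : Fin d) :
    L v q = ∑ m, v m * L (EuclideanSpace.single m 1) q := by
  conv_lhs => rw [euclid_decomp v]
  rw [map_sum, WithLp.ofLp_sum, Finset.sum_apply]
  refine Finset.sum_congr rfl fun m _ => ?_
  rw [map_smul]
  rfl

lemma clm_apply_scalar (L : E d →L[ℝ] ℝ) (v : E d) :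
    L v = ∑ m, v m * L (EuclideanSpace.single m 1) := by
  conv_lhs => rw [euclid_decomp v]
  rw [map_sum]
  refine Finset.sum_congr rfl fun m _ => ?_
  rw [map_smul]
  rfl

lemma jacSup_le (hd : 0 < d) {F : E d → E d} {x : E d} {C : ℝ}
    (h : ∀ l q, |jacEntry F x l q| ≤ C) : jacSup F x ≤ C := by
  have : Nonempty (Fin d) := ⟨⟨0, hd⟩⟩
  exact ciSup_le fun l => ciSup_le fun q => h l q

lemma jac2Sup_le (hd : 0 < d) {F : E d → E d} {x : E d} {C : ℝ}
    (h : ∀ l r q, |jac2Entry F x l r q| ≤ C) : jac2Sup F x ≤ C := by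
  have : Nonempty (Fin d) := ⟨⟨0, hd⟩⟩
  exact ciSup_le fun l => ciSup_le fun r => ciSup_le fun q => h l r q

lemma abs_jacEntry_le {F : E d → E d} {x : E d} (l q : Fin d) :
    |jacEntry F x l q| ≤ jacSup F x := by
  have h1 : |jacEntry F x l q| ≤ ⨆ q, |jacEntry F x l q| :=
    le_ciSup (f := fun q => |jacEntry F x l q|) (Set.Finite.bddAbove (Set.finite_range _)) q
  exact h1.trans (le_ciSup (f := fun l => ⨆ q, |jacEntry F x l q|)
    (Set.Finite.bddAbove (Set.finite_range _)) l)

lemma abs_jac2Entry_le {F : E d → E d} {x : E d} (l r q : Fin d) :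
    |jac2Entry F x l r q| ≤ jac2Sup F x := by
  have h1 : |jac2Entry F x l r q| ≤ ⨆ q, |jac2Entry F x l r q| :=
    le_ciSup (f := fun q => |jac2Entry F x l r q|) (Set.Finite.bddAbove (Set.finite_range _)) q
  have h2 : (⨆ q, |jac2Entry F x l r q|) ≤ ⨆ r, ⨆ q, |jac2Entry F x l r q| :=
    le_ciSup (f := fun r => ⨆ q, |jac2Entry F x l r q|) (Set.Finite.bddAbove (Set.finite_range _)) r
  exact (h1.trans h2).trans (le_ciSup (f := fun l => ⨆ r, ⨆ q, |jac2Entry F x l r q|)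
    (Set.Finite.bddAbove (Set.finite_range _)) l)

lemma jacSup_nonneg (hd : 0 < d) (F : E d → E d) (x : E d) : 0 ≤ jacSup F x :=
  le_trans (abs_nonneg _) (abs_jacEntry_le ⟨0, hd⟩ ⟨0, hd⟩)

lemma jac2Sup_nonneg (hd : 0 < d) (F : E d → E d) (x : E d) : 0 ≤ jac2Sup F x :=
  le_trans (abs_nonneg _) (abs_jac2Entry_le ⟨0, hd⟩ ⟨0, hd⟩ ⟨0, hd⟩)

end Stmt9
namespace Stmt9
open Finset

variable {d : ℕ}

lemma jacEntry_comp {g F : E d → E d} {x : E d} (hg : DifferentiableAt ℝ g x)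
    (hF : DifferentiableAt ℝ F (g x)) (l q : Fin d) :
    jacEntry (fun y => F (g y)) x l q
      = ∑ m, jacEntry g x l m * jacEntry F (g x) m q := by
  have hcomp : fderiv ℝ (fun y => F (g y)) x = (fderiv ℝ F (g x)).comp (fderiv ℝ g x) :=
    fderiv_comp x hF hg
  unfold jacEntry
  rw [hcomp, ContinuousLinearMap.comp_apply, clm_apply_coord]

/-- Differentiability of the jacobian-entry function of a `C²` map. -/
lemma jacEntry_differentiable {F : E d → E d} (hF : ContDiff ℝ 2 F) (l q : Fin d) :
    Differentiable ℝ (fun y => jacEntry F y l q) := by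
  have hD : Differentiable ℝ (fderiv ℝ F) :=
    (hF.fderiv_right (m := 1) (by norm_num)).differentiable one_ne_zero
  have : (fun y => jacEntry F y l q)
      = fun y => (EuclideanSpace.proj q).comp
          (ContinuousLinearMap.apply ℝ (E d) (EuclideanSpace.single l 1)) (fderiv ℝ F y) := rfl
  rw [this]
  exact (((EuclideanSpace.proj q).comp
          (ContinuousLinearMap.apply ℝ (E d) (EuclideanSpace.single l 1))).differentiable).comp hD

lemma fderiv_jacEntry_comp {g F : E d → E d} {x : E d} (hg : DifferentiableAt ℝ g x)
    (hF : ContDiff ℝ 2 F) (m q r : Fin d) :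
    fderiv ℝ (fun y => jacEntry F (g y) m q) x (EuclideanSpace.single r 1)
      = ∑ n, jacEntry g x r n * jac2Entry F (g x) m n q := by
  have hh : DifferentiableAt ℝ (fun z => jacEntry F z m q) (g x) :=
    (jacEntry_differentiable hF m q) (g x)
  have hcomp : fderiv ℝ (fun y => jacEntry F (g y) m q) x
      = (fderiv ℝ (fun z => jacEntry F z m q) (g x)).comp (fderiv ℝ g x) :=
    fderiv_comp x hh hg
  rw [hcomp, ContinuousLinearMap.comp_apply, clm_apply_scalar]
  rfl

end Stmt9
namespace Stmt9
open Finset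

variable {d : ℕ}

lemma jac2Entry_def (F : E d → E d) (x : E d) (l r q : Fin d) :
    jac2Entry F x l r q
      = fderiv ℝ (fun y => jacEntry F y l q) x (EuclideanSpace.single r 1) := rfl

lemma hasFDerivAt_affine {n : ℕ} {c : ℕ → ℝ} {f : ℕ → E d → E d} {H : ℝ} {x : E d}
    (hf : ∀ k ∈ range n, DifferentiableAt ℝ (f k) x) :
    HasFDerivAt (fun y => y + H • ∑ k ∈ range n, c k • f k y)
      (ContinuousLinearMap.id ℝ (E d)
        + H • ∑ k ∈ range n, c k • fderiv ℝ (f k) x) x := by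
  have h1 : HasFDerivAt (fun y : E d => ∑ k ∈ range n, c k • f k y)
      (∑ k ∈ range n, c k • fderiv ℝ (f k) x) x :=
    HasFDerivAt.fun_sum fun k hk => ((hf k hk).hasFDerivAt).const_smul (c k)
  exact (hasFDerivAt_id x).add (h1.const_smul H)

lemma jacEntry_affine {n : ℕ} {c : ℕ → ℝ} {f : ℕ → E d → E d} {H : ℝ} {x : E d}
    (hf : ∀ k ∈ range n, DifferentiableAt ℝ (f k) x) (l m : Fin d) :
    jacEntry (fun y => y + H • ∑ k ∈ range n, c k • f k y) x l m
      = EuclideanSpace.single l (1:ℝ) m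
        + H * ∑ k ∈ range n, c k * jacEntry (f k) x l m := by
  unfold jacEntry
  rw [(hasFDerivAt_affine hf).fderiv]
  simp only [ContinuousLinearMap.add_apply, ContinuousLinearMap.smul_apply,
    ContinuousLinearMap.id_apply, ContinuousLinearMap.sum_apply, PiLp.add_apply,
    PiLp.smul_apply, smul_eq_mul]
  rw [WithLp.ofLp_sum, Finset.sum_apply]
  simp [PiLp.smul_apply, smul_eq_mul, Finset.mul_sum]

lemma jac2Entry_affine {n : ℕ} {c : ℕ → ℝ} {f : ℕ → E d → E d} {H : ℝ} {x : E d}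
    (hf : ∀ k ∈ range n, ContDiff ℝ 2 (f k)) (l r m : Fin d) :
    jac2Entry (fun y => y + H • ∑ k ∈ range n, c k • f k y) x l r m
      = H * ∑ k ∈ range n, c k * jac2Entry (f k) x l r m := by
  have hfe : (fun y => jacEntry (fun z => z + H • ∑ k ∈ range n, c k • f k z) y l m)
      = fun y => EuclideanSpace.single l (1:ℝ) m
          + H * ∑ k ∈ range n, c k * jacEntry (f k) y l m := by
    funext y
    exact jacEntry_affine
      (fun k hk => ((hf k hk).differentiable (by norm_num)).differentiableAt) l m
  rw [jac2Entry_def, hfe]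
  have hdiff : ∀ k ∈ range n, DifferentiableAt ℝ (fun y => jacEntry (f k) y l m) x :=
    fun k hk => (jacEntry_differentiable (hf k hk) l m) x
  have h1 : HasFDerivAt (fun y : E d => ∑ k ∈ range n, c k * jacEntry (f k) y l m)
      (∑ k ∈ range n, c k • fderiv ℝ (fun y => jacEntry (f k) y l m) x) x :=
    HasFDerivAt.fun_sum fun k hk => ((hdiff k hk).hasFDerivAt).const_mul (c k)
  have hF : HasFDerivAt (fun y => EuclideanSpace.single l (1:ℝ) m
        + H * ∑ k ∈ range n, c k * jacEntry (f k) y l m)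
      (H • ∑ k ∈ range n, c k • fderiv ℝ (fun y => jacEntry (f k) y l m) x) x :=
    (h1.const_mul H).const_add _
  rw [hF.fderiv]
  simp only [ContinuousLinearMap.smul_apply, ContinuousLinearMap.sum_apply,
    smul_eq_mul, ← jac2Entry_def]

lemma jac2Entry_comp {g F : E d → E d} {x : E d} (hg : ContDiff ℝ 2 g)
    (hF : ContDiff ℝ 2 F) (l r q : Fin d) :
    jac2Entry (fun y => F (g y)) x l r q
      = ∑ m, (jac2Entry g x l r m * jacEntry F (g x) m q
          + jacEntry g x l m * ∑ n, jacEntry g x r n * jac2Entry F (g x) m n q) := by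
  have hgd : Differentiable ℝ g := hg.differentiable (by norm_num)
  have hFd : Differentiable ℝ F := hF.differentiable (by norm_num)
  have hfe : (fun y => jacEntry (fun z => F (g z)) y l q)
      = fun y => ∑ m, jacEntry g y l m * jacEntry F (g y) m q := by
    funext y; exact jacEntry_comp (hgd y) (hFd (g y)) l q
  rw [jac2Entry_def, hfe]
  have hu : ∀ m : Fin d, DifferentiableAt ℝ (fun y => jacEntry g y l m) x :=
    fun m => jacEntry_differentiable hg l m x
  have hv : ∀ m : Fin d, DifferentiableAt ℝ (fun y => jacEntry F (g y) m q) x :=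
    fun m => ((jacEntry_differentiable hF m q) (g x)).comp x (hgd x)
  rw [fderiv_fun_sum (A := fun m y => jacEntry g y l m * jacEntry F (g y) m q)
    (fun m _ => ((hu m).mul (hv m))), ContinuousLinearMap.sum_apply]
  refine Finset.sum_congr rfl fun m _ => ?_
  rw [fderiv_fun_mul (hu m) (hv m), ContinuousLinearMap.add_apply,
    ContinuousLinearMap.smul_apply, ContinuousLinearMap.smul_apply,
    fderiv_jacEntry_comp (hgd x) hF m q r]
  rw [show fderiv ℝ (fun y => jacEntry g y l m) x (EuclideanSpace.single r 1)
      = jac2Entry g x l r m from rfl]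
  simp only [smul_eq_mul]
  ring

end Stmt9
namespace Stmt9
open Finset

variable {d : ℕ}

/-- The argument of the `j`-th stage. -/
noncomputable def G (V : ℕ → E d → E d) (a : ℕ → ℕ → ℝ) (H : ℝ) (j : ℕ) (x : E d) : E d :=
  x + H • ∑ k ∈ range j, a j k • rkStage V a H k x

lemma rkStage_eq (V : ℕ → E d → E d) (a : ℕ → ℕ → ℝ) (H : ℝ) (j : ℕ) :
    rkStage V a H j = fun x => V j (G V a H j x) := by
  rw [rkStage]
  funext x
  rw [G, Fin.sum_univ_eq_sum_range (fun k => a j k • rkStage V a H k x) j]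

lemma contDiff_G (V : ℕ → E d → E d) (a : ℕ → ℕ → ℝ) (H : ℝ) (j : ℕ)
    (h : ∀ k < j, ContDiff ℝ 2 (rkStage V a H k)) : ContDiff ℝ 2 (G V a H j) := by
  unfold G
  exact contDiff_id.add
    ((ContDiff.sum fun k hk => (h k (mem_range.mp hk)).const_smul (a j k)).const_smul H)

lemma contDiff_stage {s : ℕ} (V : ℕ → E d → E d) (a : ℕ → ℕ → ℝ) (H : ℝ)
    (hV : ∀ j < s, ContDiff ℝ 2 (V j)) :
    ∀ j < s, ContDiff ℝ 2 (rkStage V a H j) := by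
  intro j
  induction j using Nat.strong_induction_on with
  | _ j ih =>
    intro hj
    rw [rkStage_eq]
    exact (hV j hj).comp (contDiff_G V a H j (fun k hk => ih k hk (hk.trans hj)))

end Stmt9
namespace Stmt9
open Finset

variable {d s : ℕ} {H Ap K1 K2 : ℝ} {V : ℕ → E d → E d} {a : ℕ → ℕ → ℝ}

lemma rowsum_single (l : Fin d) :
    ∑ m, |EuclideanSpace.single l (1:ℝ) m| = 1 := by
  simp [EuclideanSpace.single_apply, apply_ite abs]

lemma G_eq (V : ℕ → E d → E d) (a : ℕ → ℕ → ℝ) (H : ℝ) (j : ℕ) :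
    G V a H j = fun y => y + H • ∑ k ∈ range j, a j k • rkStage V a H k y := rfl

lemma rowsum_jac_G (hH : 0 < H) (hAp : 1 ≤ Ap)
    (ha : ∀ j k, |a j k| ≤ Ap) {j : ℕ}
    (hst : ∀ k < j, ContDiff ℝ 2 (rkStage V a H k)) (x : E d) (l : Fin d) :
    ∑ m, |jacEntry (G V a H j) x l m|
      ≤ 1 + H * Ap * d * ∑ k ∈ range j, jacSup (rkStage V a H k) x := by
  have hdiff : ∀ k ∈ range j, DifferentiableAt ℝ (rkStage V a H k) x := fun k hk =>
    ((hst k (mem_range.mp hk)).differentiable (by norm_num)).differentiableAt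
  have hent : ∀ m, jacEntry (G V a H j) x l m
      = EuclideanSpace.single l (1:ℝ) m
        + H * ∑ k ∈ range j, a j k * jacEntry (rkStage V a H k) x l m := by
    intro m
    rw [G_eq]
    exact jacEntry_affine hdiff l m
  have habs : ∀ m, |jacEntry (G V a H j) x l m|
      ≤ |EuclideanSpace.single l (1:ℝ) m|
        + H * ∑ k ∈ range j, Ap * jacSup (rkStage V a H k) x := by
    intro m
    rw [hent m]
    refine (abs_add_le _ _).trans (add_le_add le_rfl ?_)
    rw [abs_mul, abs_of_pos hH]
    refine mul_le_mul_of_nonneg_left ?_ hH.le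
    refine (Finset.abs_sum_le_sum_abs _ _).trans (Finset.sum_le_sum fun k _ => ?_)
    rw [abs_mul]
    exact mul_le_mul (ha j k) (abs_jacEntry_le l m) (abs_nonneg _) (le_trans zero_le_one hAp)
  calc ∑ m, |jacEntry (G V a H j) x l m|
      ≤ ∑ _m : Fin d, (|EuclideanSpace.single l (1:ℝ) _m|
          + H * ∑ k ∈ range j, Ap * jacSup (rkStage V a H k) x) :=
        Finset.sum_le_sum fun m _ => habs m
    _ = 1 + d * (H * ∑ k ∈ range j, Ap * jacSup (rkStage V a H k) x) := by
        rw [Finset.sum_add_distrib, rowsum_single l, Finset.sum_const, card_univ,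
          Fintype.card_fin, nsmul_eq_mul]
    _ = 1 + H * Ap * d * ∑ k ∈ range j, jacSup (rkStage V a H k) x := by
        rw [← Finset.mul_sum]; ring

lemma rowsum_jac2_G (hH : 0 < H) (hAp : 1 ≤ Ap)
    (ha : ∀ j k, |a j k| ≤ Ap) {j : ℕ}
    (hst : ∀ k < j, ContDiff ℝ 2 (rkStage V a H k)) (x : E d) (l r : Fin d) :
    ∑ m, |jac2Entry (G V a H j) x l r m|
      ≤ H * Ap * d * ∑ k ∈ range j, jac2Sup (rkStage V a H k) x := by
  have hent : ∀ m, jac2Entry (G V a H j) x l r m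
      = H * ∑ k ∈ range j, a j k * jac2Entry (rkStage V a H k) x l r m := by
    intro m
    rw [G_eq]
    exact jac2Entry_affine (fun k hk => hst k (mem_range.mp hk)) l r m
  have habs : ∀ m, |jac2Entry (G V a H j) x l r m|
      ≤ H * ∑ k ∈ range j, Ap * jac2Sup (rkStage V a H k) x := by
    intro m
    rw [hent m, abs_mul, abs_of_pos hH]
    refine mul_le_mul_of_nonneg_left ?_ hH.le
    refine (Finset.abs_sum_le_sum_abs _ _).trans (Finset.sum_le_sum fun k _ => ?_)
    rw [abs_mul]
    exact mul_le_mul (ha j k) (abs_jac2Entry_le l r m) (abs_nonneg _) (le_trans zero_le_one hAp)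
  calc ∑ m, |jac2Entry (G V a H j) x l r m|
      ≤ ∑ _m : Fin d, H * ∑ k ∈ range j, Ap * jac2Sup (rkStage V a H k) x :=
        Finset.sum_le_sum fun m _ => habs m
    _ = d * (H * ∑ k ∈ range j, Ap * jac2Sup (rkStage V a H k) x) := by
        rw [Finset.sum_const, card_univ, Fintype.card_fin, nsmul_eq_mul]
    _ = H * Ap * d * ∑ k ∈ range j, jac2Sup (rkStage V a H k) x := by
        rw [← Finset.mul_sum]; ring

/-- One-step first-order bound. -/
lemma stage_jacSup_step (hd : 0 < d) (hH : 0 < H) (hAp : 1 ≤ Ap) (hK1 : 0 < K1)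
    (ha : ∀ j k, |a j k| ≤ Ap) {j : ℕ} (hj : j < s)
    (hV : ∀ i < s, ContDiff ℝ 2 (V i)) (hV1 : ∀ i < s, ∀ x, jacSup (V i) x ≤ K1)
    (x : E d) :
    jacSup (rkStage V a H j) x
      ≤ K1 * (1 + H * Ap * d * ∑ k ∈ range j, jacSup (rkStage V a H k) x) := by
  have hst : ∀ k < j, ContDiff ℝ 2 (rkStage V a H k) :=
    fun k hk => contDiff_stage V a H hV k (hk.trans hj)
  have hGd : DifferentiableAt ℝ (G V a H j) x :=
    ((contDiff_G V a H j hst).differentiable (by norm_num)).differentiableAt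
  have hVd : DifferentiableAt ℝ (V j) (G V a H j x) :=
    ((hV j hj).differentiable (by norm_num)).differentiableAt
  have hrow := rowsum_jac_G hH hAp ha hst x
  have hrow_nonneg : (0:ℝ)
      ≤ 1 + H * Ap * d * ∑ k ∈ range j, jacSup (rkStage V a H k) x := by
    refine le_trans ?_ (hrow ⟨0, hd⟩)
    exact Finset.sum_nonneg fun m _ => abs_nonneg _
  refine jacSup_le hd fun l q => ?_
  rw [rkStage_eq, jacEntry_comp hGd hVd l q]
  calc |∑ m, jacEntry (G V a H j) x l m * jacEntry (V j) (G V a H j x) m q|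
      ≤ ∑ m, |jacEntry (G V a H j) x l m| * K1 := by
        refine (Finset.abs_sum_le_sum_abs _ _).trans (Finset.sum_le_sum fun m _ => ?_)
        rw [abs_mul]
        exact mul_le_mul_of_nonneg_left
          ((abs_jacEntry_le m q).trans (hV1 j hj _)) (abs_nonneg _)
    _ = (∑ m, |jacEntry (G V a H j) x l m|) * K1 := by rw [Finset.sum_mul]
    _ ≤ (1 + H * Ap * d * ∑ k ∈ range j, jacSup (rkStage V a H k) x) * K1 :=
        mul_le_mul_of_nonneg_right (hrow l) hK1.le
    _ = K1 * (1 + H * Ap * d * ∑ k ∈ range j, jacSup (rkStage V a H k) x) := mul_comm _ _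

lemma geom_aux (c : ℝ) (j : ℕ) : c * ∑ k ∈ range j, (1+c)^k = (1+c)^j - 1 := by
  calc c * ∑ k ∈ range j, (1+c)^k = (∑ k ∈ range j, (1+c)^k) * ((1+c) - 1) := by ring
    _ = (1+c)^j - 1 := geom_sum_mul (1+c) j

/-- First-order bound by strong induction. -/
lemma stage_bound1 (hd : 0 < d) (hH : 0 < H) (hAp : 1 ≤ Ap) (hK1 : 0 < K1)
    (ha : ∀ j k, |a j k| ≤ Ap)
    (hV : ∀ i < s, ContDiff ℝ 2 (V i)) (hV1 : ∀ i < s, ∀ x, jacSup (V i) x ≤ K1) :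
    ∀ j < s, ∀ x : E d, jacSup (rkStage V a H j) x ≤ K1 * (1 + K1*Ap*H*d)^j := by
  intro j
  induction j using Nat.strong_induction_on with
  | _ j ih =>
    intro hj x
    set c : ℝ := K1*Ap*H*d with hc
    have hc0 : 0 ≤ c := by positivity
    have hHAd : (0:ℝ) ≤ H * Ap * d := by positivity
    refine (stage_jacSup_step hd hH hAp hK1 ha hj hV hV1 x).trans ?_
    have hsum : ∑ k ∈ range j, jacSup (rkStage V a H k) x
        ≤ ∑ k ∈ range j, K1 * (1+c)^k :=
      Finset.sum_le_sum fun k hk => ih k (mem_range.mp hk) ((mem_range.mp hk).trans hj) x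
    have hkey : H * Ap * d * ∑ k ∈ range j, jacSup (rkStage V a H k) x ≤ (1+c)^j - 1 := by
      calc H * Ap * d * ∑ k ∈ range j, jacSup (rkStage V a H k) x
          ≤ H * Ap * d * ∑ k ∈ range j, K1 * (1+c)^k :=
            mul_le_mul_of_nonneg_left hsum hHAd
        _ = c * ∑ k ∈ range j, (1+c)^k := by
            rw [Finset.mul_sum, Finset.mul_sum]
            exact Finset.sum_congr rfl fun k _ => by rw [hc]; ring
        _ = (1+c)^j - 1 := geom_aux c j
    nlinarith [hkey, hK1.le]

/-- `(1+c)^n ≤ 1 + (2^n - 1) c` for `0 ≤ c ≤ 1`. -/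
lemma pow_one_add_le (c : ℝ) (hc0 : 0 ≤ c) (hc1 : c ≤ 1) :
    ∀ n : ℕ, (1+c)^n ≤ 1 + ((2:ℝ)^n - 1)*c := by
  intro n
  induction n with
  | zero => norm_num
  | succ n ih =>
    have h2 : (1:ℝ) ≤ 2^n := one_le_pow₀ (by norm_num)
    have hp : (0:ℝ) ≤ (1+c)^n := by positivity
    calc (1+c)^(n+1) = (1+c)^n * (1+c) := by rw [pow_succ]
      _ ≤ (1 + ((2:ℝ)^n - 1)*c) * (1+c) := by nlinarith
      _ ≤ 1 + ((2:ℝ)^(n+1) - 1)*c := by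
          rw [pow_succ]
          nlinarith [mul_le_mul_of_nonneg_left hc1
            (mul_nonneg (by linarith : (0:ℝ) ≤ 2^n - 1) hc0)]

/-- One-step second-order bound. -/
lemma stage_jac2Sup_step (hd : 0 < d) (hH : 0 < H) (hAp : 1 ≤ Ap)
    (hK1 : 0 < K1) (hK2 : 0 < K2)
    (ha : ∀ j k, |a j k| ≤ Ap) {j : ℕ} (hj : j < s)
    (hV : ∀ i < s, ContDiff ℝ 2 (V i)) (hV1 : ∀ i < s, ∀ x, jacSup (V i) x ≤ K1)
    (hV2 : ∀ i < s, ∀ x, jac2Sup (V i) x ≤ K2) (x : E d) :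
    jac2Sup (rkStage V a H j) x
      ≤ K1*Ap*H*d * ∑ k ∈ range j, jac2Sup (rkStage V a H k) x
        + K2 * ((1 + K1*Ap*H*d)^j)^2 := by
  set c : ℝ := K1*Ap*H*d with hc
  have hst : ∀ k < j, ContDiff ℝ 2 (rkStage V a H k) :=
    fun k hk => contDiff_stage V a H hV k (hk.trans hj)
  have hG : ContDiff ℝ 2 (G V a H j) := contDiff_G V a H j hst
  have hrow1 := rowsum_jac_G hH hAp ha hst x
  have hrow2 := rowsum_jac2_G hH hAp ha hst x
  -- row sums of first derivatives of G are at most (1+c)^j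
  have hrowP : ∀ l, ∑ m, |jacEntry (G V a H j) x l m| ≤ (1+c)^j := by
    intro l
    refine (hrow1 l).trans ?_
    have hsum : ∑ k ∈ range j, jacSup (rkStage V a H k) x
        ≤ ∑ k ∈ range j, K1 * (1+c)^k :=
      Finset.sum_le_sum fun k hk =>
        stage_bound1 hd hH hAp hK1 ha hV hV1 k ((mem_range.mp hk).trans hj) x
    have hHAd : (0:ℝ) ≤ H * Ap * d := by positivity
    have : H * Ap * d * ∑ k ∈ range j, jacSup (rkStage V a H k) x ≤ (1+c)^j - 1 := by
      calc H * Ap * d * ∑ k ∈ range j, jacSup (rkStage V a H k) x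
          ≤ H * Ap * d * ∑ k ∈ range j, K1 * (1+c)^k :=
            mul_le_mul_of_nonneg_left hsum hHAd
        _ = c * ∑ k ∈ range j, (1+c)^k := by
            rw [Finset.mul_sum, Finset.mul_sum]
            exact Finset.sum_congr rfl fun k _ => by rw [hc]; ring
        _ = (1+c)^j - 1 := geom_aux c j
    linarith
  refine jac2Sup_le hd fun l r q => ?_
  rw [rkStage_eq, jac2Entry_comp hG (hV j hj) l r q]
  have hterm : ∀ m : Fin d,
      |jac2Entry (G V a H j) x l r m * jacEntry (V j) (G V a H j x) m q
        + jacEntry (G V a H j) x l m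
          * ∑ n, jacEntry (G V a H j) x r n * jac2Entry (V j) (G V a H j x) m n q|
      ≤ |jac2Entry (G V a H j) x l r m| * K1
        + |jacEntry (G V a H j) x l m| * ((1+c)^j * K2) := by
    intro m
    refine (abs_add_le _ _).trans (add_le_add ?_ ?_)
    · rw [abs_mul]
      exact mul_le_mul_of_nonneg_left
        ((abs_jacEntry_le m q).trans (hV1 j hj _)) (abs_nonneg _)
    · rw [abs_mul]
      refine mul_le_mul_of_nonneg_left ?_ (abs_nonneg _)
      calc |∑ n, jacEntry (G V a H j) x r n * jac2Entry (V j) (G V a H j x) m n q|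
          ≤ ∑ n, |jacEntry (G V a H j) x r n| * K2 := by
            refine (Finset.abs_sum_le_sum_abs _ _).trans (Finset.sum_le_sum fun n _ => ?_)
            rw [abs_mul]
            exact mul_le_mul_of_nonneg_left
              ((abs_jac2Entry_le m n q).trans (hV2 j hj _)) (abs_nonneg _)
        _ = (∑ n, |jacEntry (G V a H j) x r n|) * K2 := by rw [Finset.sum_mul]
        _ ≤ (1+c)^j * K2 := mul_le_mul_of_nonneg_right (hrowP r) hK2.le
  calc |∑ m, (jac2Entry (G V a H j) x l r m * jacEntry (V j) (G V a H j x) m q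
        + jacEntry (G V a H j) x l m
          * ∑ n, jacEntry (G V a H j) x r n * jac2Entry (V j) (G V a H j x) m n q)|
      ≤ ∑ m, (|jac2Entry (G V a H j) x l r m| * K1
          + |jacEntry (G V a H j) x l m| * ((1+c)^j * K2)) :=
        (Finset.abs_sum_le_sum_abs _ _).trans (Finset.sum_le_sum fun m _ => hterm m)
    _ = (∑ m, |jac2Entry (G V a H j) x l r m|) * K1
          + (∑ m, |jacEntry (G V a H j) x l m|) * ((1+c)^j * K2) := by
        rw [Finset.sum_add_distrib, Finset.sum_mul, Finset.sum_mul]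
    _ ≤ (H * Ap * d * ∑ k ∈ range j, jac2Sup (rkStage V a H k) x) * K1
          + (1+c)^j * ((1+c)^j * K2) := by
        have h1 : (0:ℝ) ≤ (1+c)^j * K2 := by positivity
        refine add_le_add (mul_le_mul_of_nonneg_right (hrow2 l r) hK1.le)
          (mul_le_mul_of_nonneg_right (hrowP l) h1)
    _ = c * ∑ k ∈ range j, jac2Sup (rkStage V a H k) x + K2 * ((1+c)^j)^2 := by
        rw [hc]; ring

/-- Cumulative second-order bound. -/
lemma stage_bound2 (hd : 0 < d) (hH : 0 < H) (hAp : 1 ≤ Ap)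
    (hK1 : 0 < K1) (hK2 : 0 < K2)
    (ha : ∀ j k, |a j k| ≤ Ap)
    (hV : ∀ i < s, ContDiff ℝ 2 (V i)) (hV1 : ∀ i < s, ∀ x, jacSup (V i) x ≤ K1)
    (hV2 : ∀ i < s, ∀ x, jac2Sup (V i) x ≤ K2) :
    ∀ j ≤ s, ∀ x : E d, ∑ k ∈ range j, jac2Sup (rkStage V a H k) x
      ≤ K2 * j * (1 + K1*Ap*H*d)^(s+j) := by
  set c : ℝ := K1*Ap*H*d with hc
  have hc0 : 0 ≤ c := by positivity
  intro j
  induction j with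
  | zero => intro _ x; simp
  | succ j ih =>
    intro hj1 x
    have hj : j < s := hj1
    have hA := ih (le_of_lt hj) x
    have hA0 : 0 ≤ ∑ k ∈ range j, jac2Sup (rkStage V a H k) x :=
      Finset.sum_nonneg fun k _ => jac2Sup_nonneg hd _ x
    have hM := stage_jac2Sup_step hd hH hAp hK1 hK2 ha hj hV hV1 hV2 x
    rw [Finset.sum_range_succ]
    have hpow1 : ((1+c)^j)^2 ≤ (1+c)^(s+(j+1)) := by
      rw [← pow_mul]
      exact pow_le_pow_right₀ (by linarith) (by omega)
    have hpow2 : (1+c)^(s+j) * (1+c) = (1+c)^(s+(j+1)) := by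
      rw [show s+(j+1) = (s+j)+1 from rfl, pow_succ]
    have hK20 := hK2.le
    rw [← hc] at hM
    push_cast
    calc ∑ k ∈ range j, jac2Sup (rkStage V a H k) x + jac2Sup (rkStage V a H j) x
        ≤ (1+c) * ∑ k ∈ range j, jac2Sup (rkStage V a H k) x + K2 * ((1+c)^j)^2 := by
          linarith [hM]
      _ ≤ (1+c) * (K2 * j * (1+c)^(s+j)) + K2 * (1+c)^(s+(j+1)) := by
          exact add_le_add (mul_le_mul_of_nonneg_left hA (by linarith))
            (mul_le_mul_of_nonneg_left hpow1 hK20)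
      _ = K2 * ((j:ℝ)+1) * (1+c)^(s+(j+1)) := by
          rw [← hpow2]; ring

end Stmt9

/-- entrywise bounds on first and second derivatives of the
Runge–Kutta stages (stated for a generic family of fields, hence covering both
the approximate fields `V̂` and the true fields `V`). -/
theorem stmt_9 {d s : ℕ} (hd : 0 < d) (hs : 0 < s) (H : ℝ) (hH : 0 < H)
    (Ap Bp K1 K2 : ℝ) (hAp : 1 ≤ Ap) (hBp : 1 ≤ Bp) (hK1 : 0 < K1) (hK2 : 0 < K2)
    (V : ℕ → E d → E d) (hV : ∀ j < s, ContDiff ℝ 2 (V j))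
    (a : ℕ → ℕ → ℝ) (b : ℕ → ℝ)
    (ha : ∀ j k, |a j k| ≤ Ap) (hb : ∀ j, |b j| ≤ Bp)
    (hV1 : ∀ j < s, ∀ x, jacSup (V j) x ≤ K1)
    (hV2 : ∀ j < s, ∀ x, jac2Sup (V j) x ≤ K2) :
    (∀ x : E d, ∑ i ∈ Finset.range s, jacSup (rkStage V a H i) x
        ≤ s * K1 * (1 + K1 * Ap * H * d) ^ (s - 1)) ∧
    (∀ x : E d, ∑ i ∈ Finset.range s, jac2Sup (rkStage V a H i) x
        ≤ 2 * K2 * s ^ 3 * (1 + K1 * Ap * H * d) ^ (2 * s)) ∧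
    (∀ x : E d, jac2Sup
          (fun y => y + H • ∑ j ∈ Finset.range s, b j • rkStage V a H j y) x
        ≤ 2 * H * Bp * K2 * s ^ 3 * (1 + K1 * Ap * H * d) ^ (2 * s)) ∧
    (K1 * Ap * H * d * s * 2 ^ s ≤ 1 →
      ∀ i < s, ∀ x : E d, jacSup (rkStage V a H i) x ≤ 2 * K1) := by
  set c : ℝ := K1 * Ap * H * d with hc
  have hc0 : 0 ≤ c := by positivity
  have hc1' : (1:ℝ) ≤ 1 + c := by linarith
  have hs1 : (1:ℝ) ≤ (s:ℝ) := by exact_mod_cast hs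
  have hs3 : (s:ℝ) ≤ 2 * (s:ℝ)^3 := by
    have h2 : (1:ℝ) ≤ (s:ℝ)^2 := by nlinarith
    nlinarith [mul_le_mul_of_nonneg_left h2 (by linarith : (0:ℝ) ≤ (s:ℝ))]
  -- second-order cumulative bound at j = s
  have hcum : ∀ x : E d, ∑ k ∈ Finset.range s, jac2Sup (rkStage V a H k) x
      ≤ K2 * s * (1 + c) ^ (2*s) := by
    intro x
    have := Stmt9.stage_bound2 hd hH hAp hK1 hK2 ha hV hV1 hV2 s le_rfl x
    rwa [show s + s = 2*s by ring, ← hc] at this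
    -- note: bound2 gives exponent (s+s)
  refine ⟨?_, ?_, ?_, ?_⟩
  · -- first statement
    intro x
    calc ∑ i ∈ Finset.range s, jacSup (rkStage V a H i) x
        ≤ ∑ _i ∈ Finset.range s, K1 * (1+c)^(s-1) := by
          refine Finset.sum_le_sum fun i hi => ?_
          refine (Stmt9.stage_bound1 hd hH hAp hK1 ha hV hV1 i (Finset.mem_range.mp hi) x).trans ?_
          rw [← hc]
          exact mul_le_mul_of_nonneg_left
            (pow_le_pow_right₀ hc1' (by have := Finset.mem_range.mp hi; omega : i ≤ s - 1)) hK1.le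
      _ = s * K1 * (1+c)^(s-1) := by
          rw [Finset.sum_const, Finset.card_range, nsmul_eq_mul]; ring
  · -- second statement
    intro x
    refine (hcum x).trans ?_
    have hP : (0:ℝ) ≤ (1+c)^(2*s) := by positivity
    nlinarith [mul_le_mul_of_nonneg_right (mul_le_mul_of_nonneg_left hs3 hK2.le) hP]
  · -- third statement
    intro x
    have hst : ∀ k ∈ Finset.range s, ContDiff ℝ 2 (rkStage V a H k) :=
      fun k hk => Stmt9.contDiff_stage V a H hV k (Finset.mem_range.mp hk)
    have hS2 : ∑ k ∈ Finset.range s, jac2Sup (rkStage V a H k) x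
        ≤ K2 * s * (1 + c) ^ (2*s) := hcum x
    refine Stmt9.jac2Sup_le hd fun l r q => ?_
    rw [Stmt9.jac2Entry_affine hst l r q]
    have hb0 : (0:ℝ) ≤ Bp := le_trans zero_le_one hBp
    calc |H * ∑ j ∈ Finset.range s, b j * jac2Entry (rkStage V a H j) x l r q|
        ≤ H * ∑ j ∈ Finset.range s, Bp * jac2Sup (rkStage V a H j) x := by
          rw [abs_mul, abs_of_pos hH]
          refine mul_le_mul_of_nonneg_left ?_ hH.le
          refine (Finset.abs_sum_le_sum_abs _ _).trans (Finset.sum_le_sum fun j _ => ?_)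
          rw [abs_mul]
          exact mul_le_mul (hb j) (Stmt9.abs_jac2Entry_le l r q) (abs_nonneg _) hb0
      _ = H * Bp * ∑ j ∈ Finset.range s, jac2Sup (rkStage V a H j) x := by
          rw [← Finset.mul_sum]; ring
      _ ≤ H * Bp * (K2 * s * (1 + c) ^ (2*s)) :=
          mul_le_mul_of_nonneg_left hS2 (by positivity)
      _ ≤ 2 * H * Bp * K2 * s ^ 3 * (1 + c) ^ (2*s) := by
          have hP : (0:ℝ) ≤ (1+c)^(2*s) := by positivity
          nlinarith [mul_le_mul_of_nonneg_right (mul_le_mul_of_nonneg_left hs3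
            (by positivity : (0:ℝ) ≤ H * Bp * K2)) hP]
  · -- fourth statement
    intro hsmall i hi x
    have h2s : (1:ℝ) ≤ 2^s := one_le_pow₀ (by norm_num)
    have hs2s : (1:ℝ) ≤ (s:ℝ) * 2^s := by nlinarith
    have hc1 : c ≤ 1 := by nlinarith
    have hbin := Stmt9.pow_one_add_le c hc0 hc1 s
    have hmono : (1+c)^i ≤ (1+c)^s := pow_le_pow_right₀ hc1' (le_of_lt hi)
    have h1 : jacSup (rkStage V a H i) x ≤ K1 * (1+c)^i := by
      have := Stmt9.stage_bound1 hd hH hAp hK1 ha hV hV1 i hi x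
      rwa [← hc] at this
    have hfin : (1+c)^s ≤ 2 := by nlinarith
    nlinarith [hK1.le, pow_nonneg (by linarith : (0:ℝ) ≤ 1+c) i]
end

section
/- Let the stages k̄_1, …, k̄_s be defined recursively by k̄_1(x) = V_{t+c_1H}(x) and k̄_j(x) = V_{t+c_jH}(x + H Σ_{k<j} a_{jk} k̄_k(x)), where V_u(x) = x + ∇log q_{T−u}(x) is the true reverse velocity field and t + H ≤ T − τ. Then for all x ∈ ℝ^d: Σ_{i=1}^s ‖k̄_i(x)‖_∞ ≤ s τ^{−1} (1 + 2τ^{−1} A_p H)^{s−1} [D + 2‖x‖_∞] and Σ_{i=1}^s ‖k̄_i(x)‖₂ ≤ 2s τ^{−1} (1 + 2τ^{−1} A_p H)^{s−1} [√d D + ‖x‖₂]. Moreover, if H A_p 2^s s τ^{−1} ≤ 1, then for each i ∈ {1, …, s}: ‖k̄_i(x)‖_∞ ≤ 4τ^{−1}(‖x‖_∞ + D) and ‖k̄_i(x)‖₂ ≤ 4τ^{−1}(‖x‖₂ + √d D). -/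
set_option synthInstance.maxHeartbeats 1000000
set_option maxHeartbeats 1000000


open MeasureTheory

/-- The ℓ^∞ (coordinatewise maximum) norm on ℝ^d. -/
noncomputable def supNorm {d : ℕ} (v : E d) : ℝ := ⨆ i, |v i|

/-- The density `q_t` of the OU process at time `t > 0` started from `μ`. -/
noncomputable def ouDensity {d : ℕ} (μ : Measure (E d)) (t : ℝ) (y : E d) : ℝ :=
  ∫ x, (2 * Real.pi * (1 - Real.exp (-(2 * t)))) ^ (-(d : ℝ) / 2) *
      Real.exp (-‖y - Real.exp (-t) • x‖ ^ 2 / (2 * (1 - Real.exp (-(2 * t))))) ∂μ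

section core
variable {d : ℕ}

lemma sigma2_pos {r : ℝ} (hr : 0 < r) : 0 < 1 - Real.exp (-(2*r)) := by
  have : Real.exp (-(2*r)) < 1 := Real.exp_lt_one_iff.mpr (by linarith)
  linarith

lemma hasFDerivAt_integrand (r : ℝ) (hr : 0 < r) (a x : E d) :
    HasFDerivAt (fun y : E d => (2 * Real.pi * (1 - Real.exp (-(2 * r)))) ^ (-(d : ℝ) / 2) *
      Real.exp (-‖y - Real.exp (-r) • a‖ ^ 2 / (2 * (1 - Real.exp (-(2 * r))))))
      (((2 * Real.pi * (1 - Real.exp (-(2 * r)))) ^ (-(d : ℝ) / 2) *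
        Real.exp (-‖x - Real.exp (-r) • a‖ ^ 2 / (2 * (1 - Real.exp (-(2 * r))))) *
        (-(1 - Real.exp (-(2 * r)))⁻¹)) • innerSL ℝ (x - Real.exp (-r) • a)) x := by
  set σ2 := 1 - Real.exp (-(2*r)) with hσ2
  have hσ2pos : 0 < σ2 := sigma2_pos hr
  clear_value σ2
  have h1 : HasFDerivAt (fun y : E d => ‖y - Real.exp (-r) • a‖ ^ 2)
      (2 • (innerSL ℝ (x - Real.exp (-r) • a))) x := by
    simpa using ((hasFDerivAt_id x).sub_const (Real.exp (-r) • a)).norm_sq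
  have h2 := ((h1.mul_const (-(2*σ2))⁻¹).exp).const_mul
      ((2 * Real.pi * σ2) ^ (-(d : ℝ) / 2))
  have harg : ∀ v : E d, ‖v‖ ^ 2 * (-(2*σ2))⁻¹ = -‖v‖ ^ 2 / (2 * σ2) := by
    intro v; rw [inv_neg]; ring
  have hfun : (fun y : E d => (2 * Real.pi * σ2) ^ (-(d : ℝ) / 2) *
      Real.exp (‖y - Real.exp (-r) • a‖ ^ 2 * (-(2*σ2))⁻¹))
      = (fun y : E d => (2 * Real.pi * σ2) ^ (-(d : ℝ) / 2) *
      Real.exp (-‖y - Real.exp (-r) • a‖ ^ 2 / (2 * σ2))) := by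
    funext y; rw [harg]
  rw [hfun] at h2
  refine h2.congr_fderiv ?_
  ext w
  simp only [ContinuousLinearMap.smul_apply, smul_eq_mul, ContinuousLinearMap.coe_smul',
    Pi.smul_apply, nsmul_eq_mul, Nat.cast_ofNat, harg]
  rw [show (-(2*σ2))⁻¹ = -(2⁻¹ * σ2⁻¹) by rw [inv_neg, mul_inv]]
  ring

end core

lemma grad_log_ou (μ : Measure (E d)) [IsProbabilityMeasure μ] (r : ℝ) (hr : 0 < r)
    (R : ℝ) (hR : ∀ᵐ a ∂μ, ‖a‖ ≤ R) (x : E d) :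
    ∃ W : ℝ, ∃ M : E d, 0 < W ∧
      W = (∫ a, Real.exp (-‖x - Real.exp (-r) • a‖ ^ 2 / (2 * (1 - Real.exp (-(2 * r))))) ∂μ) ∧
      M = (∫ a, Real.exp (-‖x - Real.exp (-r) • a‖ ^ 2 / (2 * (1 - Real.exp (-(2 * r))))) • a ∂μ) ∧
      Integrable (fun a => Real.exp (-‖x - Real.exp (-r) • a‖ ^ 2 / (2 * (1 - Real.exp (-(2 * r))))) • a) μ ∧
      Integrable (fun a => Real.exp (-‖x - Real.exp (-r) • a‖ ^ 2 / (2 * (1 - Real.exp (-(2 * r)))))) μ ∧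
      gradient (fun y => Real.log (ouDensity μ r y)) x
        = (1 - Real.exp (-(2*r)))⁻¹ • (Real.exp (-r) • (W⁻¹ • M) - x) := by
  have hσ2 : 0 < 1 - Real.exp (-(2*r)) := sigma2_pos hr
  set σ2 : ℝ := 1 - Real.exp (-(2*r)) with hσ2def
  set l : ℝ := Real.exp (-r) with hldef
  have hl0 : 0 < l := Real.exp_pos _
  have hl1 : l ≤ 1 := Real.exp_le_one_iff.mpr (by linarith)
  set C : ℝ := (2 * Real.pi * σ2) ^ (-(d : ℝ) / 2) with hCdef
  have hC : 0 < C := Real.rpow_pos_of_pos (by positivity) _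
  set w : E d → E d → ℝ := fun y a => Real.exp (-‖y - l • a‖ ^ 2 / (2 * σ2)) with hwdef
  have hwpos : ∀ y a, 0 < w y a := fun y a => Real.exp_pos _
  have hwle : ∀ y a, w y a ≤ 1 := by
    intro y a
    apply Real.exp_le_one_iff.mpr
    apply div_nonpos_of_nonpos_of_nonneg
    · exact neg_nonpos.mpr (by positivity)
    · positivity
  have hwcont : ∀ y, Continuous (w y) := by
    intro y
    apply Real.continuous_exp.comp
    apply Continuous.div_const
    fun_prop
  have hWint : ∀ y, Integrable (w y) μ := by
    intro y
    refine (integrable_const (1:ℝ)).mono' ((hwcont y).aestronglyMeasurable) ?_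
    filter_upwards with a
    rw [Real.norm_eq_abs, abs_of_pos (hwpos y a)]
    exact hwle y a
  have hR0 : 0 ≤ R := by
    obtain ⟨a, ha⟩ := hR.exists
    exact le_trans (norm_nonneg a) ha
  have hMint : Integrable (fun a => w x a • a) μ := by
    refine (integrable_const R).mono' ?_ ?_
    · exact ((hwcont x).smul continuous_id).aestronglyMeasurable
    · filter_upwards [hR] with a haR
      rw [norm_smul, Real.norm_eq_abs, abs_of_pos (hwpos x a)]
      calc w x a * ‖a‖ ≤ 1 * R := by
            apply mul_le_mul (hwle x a) haR (norm_nonneg a) zero_le_one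
        _ = R := one_mul R
  set W : ℝ := ∫ a, w x a ∂μ with hWdef
  set M : E d := ∫ a, w x a • a ∂μ with hMdef
  have hWpos : 0 < W := by
    have hlow : ∀ᵐ a ∂μ, Real.exp (-(‖x‖ + R) ^ 2 / (2 * σ2)) ≤ w x a := by
      filter_upwards [hR] with a haR
      apply Real.exp_le_exp.mpr
      apply div_le_div_of_nonneg_right ?_ (by linarith)
      · have h1 : ‖x - l • a‖ ≤ ‖x‖ + R := by
          calc ‖x - l • a‖ ≤ ‖x‖ + ‖l • a‖ := norm_sub_le _ _
            _ ≤ ‖x‖ + R := by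
                rw [norm_smul, Real.norm_eq_abs, abs_of_pos hl0]
                nlinarith
        have h2 : ‖x - l • a‖ ^ 2 ≤ (‖x‖ + R) ^ 2 := by nlinarith [norm_nonneg (x - l • a)]
        linarith
    calc (0:ℝ) < Real.exp (-(‖x‖ + R) ^ 2 / (2 * σ2)) := Real.exp_pos _
      _ = ∫ _a, Real.exp (-(‖x‖ + R) ^ 2 / (2 * σ2)) ∂μ := by simp
      _ ≤ W := integral_mono_ae (integrable_const _) (hWint x) hlow
  refine ⟨W, M, hWpos, rfl, rfl, hMint, hWint x, ?_⟩
  -- the derivative under the integral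
  have key : HasFDerivAt (fun y => ouDensity μ r y)
      (∫ a, ((C * w x a * (-σ2⁻¹)) • innerSL ℝ (x - l • a) : E d →L[ℝ] ℝ) ∂μ) x := by
    apply hasFDerivAt_integral_of_dominated_of_fderiv_le
      (F := fun y a => C * w y a)
      (F' := fun y a => (C * w y a * (-σ2⁻¹)) • innerSL ℝ (y - l • a))
      (bound := fun _ => C * σ2⁻¹ * (‖x‖ + 1 + R)) (Metric.ball_mem_nhds x one_pos)
    · filter_upwards with y
      exact ((continuous_const.mul (hwcont y))).aestronglyMeasurable
    · exact (hWint x).const_mul C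
    · apply Continuous.aestronglyMeasurable
      apply Continuous.smul (f := fun a => C * w x a * -σ2⁻¹) (g := fun a => innerSL ℝ (x - l • a))
      · exact (continuous_const.mul (hwcont x)).mul continuous_const
      · exact (innerSL ℝ).continuous.comp (continuous_const.sub (continuous_id.const_smul l))
    · filter_upwards [hR] with a haR y hy
      rw [norm_smul (C * w y a * -σ2⁻¹) ((innerSL ℝ) (y - l • a)), innerSL_apply_norm, Real.norm_eq_abs, abs_mul, abs_mul]
      rw [abs_of_pos hC, abs_of_pos (hwpos y a), abs_neg, abs_of_pos (by positivity : (0:ℝ) < σ2⁻¹)]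
      have hy1 : ‖y‖ ≤ ‖x‖ + 1 := by
        have h := mem_ball_iff_norm.mp hy
        have h2 := norm_sub_norm_le y x
        linarith
      have hna : ‖y - l • a‖ ≤ ‖x‖ + 1 + R := by
        calc ‖y - l • a‖ ≤ ‖y‖ + ‖l • a‖ := norm_sub_le _ _
          _ ≤ ‖x‖ + 1 + R := by
              rw [norm_smul, Real.norm_eq_abs, abs_of_pos hl0]
              nlinarith
      calc C * w y a * σ2⁻¹ * ‖y - l • a‖ ≤ C * 1 * σ2⁻¹ * (‖x‖ + 1 + R) := by
            apply mul_le_mul ?_ hna (norm_nonneg _) (by positivity)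
            apply mul_le_mul_of_nonneg_right ?_ (by positivity)
            exact mul_le_mul_of_nonneg_left (hwle y a) (le_of_lt hC)
        _ = C * σ2⁻¹ * (‖x‖ + 1 + R) := by ring
    · exact integrable_const _
    · filter_upwards with a y _
      exact hasFDerivAt_integrand r hr a y
  set u : E d → E d := fun a => (C * w x a * σ2⁻¹) • (l • a - x) with hudef
  have hucont : Continuous u := by
    apply Continuous.smul (f := fun a => C * w x a * σ2⁻¹) (g := fun a => l • a - x)
    · exact (continuous_const.mul (hwcont x)).mul continuous_const
    · exact (continuous_id.const_smul l).sub continuous_const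
  have hu_int : Integrable u μ := by
    refine (integrable_const (C * σ2⁻¹ * (R + ‖x‖))).mono' hucont.aestronglyMeasurable ?_
    filter_upwards [hR] with a haR
    rw [hudef]
    rw [norm_smul (C * w x a * σ2⁻¹) (l • a - x), Real.norm_eq_abs, abs_mul, abs_mul]
    rw [abs_of_pos hC, abs_of_pos (hwpos x a), abs_of_pos (by positivity : (0:ℝ) < σ2⁻¹)]
    have hna : ‖l • a - x‖ ≤ R + ‖x‖ := by
      calc ‖l • a - x‖ ≤ ‖l • a‖ + ‖x‖ := norm_sub_le _ _
        _ ≤ R + ‖x‖ := by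
            rw [norm_smul, Real.norm_eq_abs, abs_of_pos hl0]
            nlinarith
    calc C * w x a * σ2⁻¹ * ‖l • a - x‖ ≤ C * 1 * σ2⁻¹ * (R + ‖x‖) := by
          apply mul_le_mul ?_ hna (norm_nonneg _) (by positivity)
          apply mul_le_mul_of_nonneg_right ?_ (by positivity)
          exact mul_le_mul_of_nonneg_left (hwle x a) (le_of_lt hC)
      _ = C * σ2⁻¹ * (R + ‖x‖) := by ring
  have hF'int : Integrable (fun a => ((C * w x a * (-σ2⁻¹)) • innerSL ℝ (x - l • a) : E d →L[ℝ] ℝ)) μ := by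
    refine (integrable_const (C * σ2⁻¹ * (R + ‖x‖))).mono' ?_ ?_
    · apply Continuous.aestronglyMeasurable
      apply Continuous.smul (f := fun a => C * w x a * -σ2⁻¹) (g := fun a => innerSL ℝ (x - l • a))
      · exact ((continuous_const.mul (hwcont x))).mul continuous_const
      · exact (innerSL ℝ).continuous.comp (continuous_const.sub (continuous_id.const_smul l))
    · filter_upwards [hR] with a haR
      rw [norm_smul (C * w x a * -σ2⁻¹) ((innerSL ℝ) (x - l • a)), innerSL_apply_norm,
        Real.norm_eq_abs, abs_mul, abs_mul]
      rw [abs_of_pos hC, abs_of_pos (hwpos x a), abs_neg, abs_of_pos (by positivity : (0:ℝ) < σ2⁻¹)]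
      have hna : ‖x - l • a‖ ≤ R + ‖x‖ := by
        calc ‖x - l • a‖ ≤ ‖x‖ + ‖l • a‖ := norm_sub_le _ _
          _ ≤ ‖x‖ + R := by
              rw [norm_smul, Real.norm_eq_abs, abs_of_pos hl0]
              nlinarith
          _ = R + ‖x‖ := by ring
      calc C * w x a * σ2⁻¹ * ‖x - l • a‖ ≤ C * 1 * σ2⁻¹ * (R + ‖x‖) := by
            apply mul_le_mul ?_ hna (norm_nonneg _) (by positivity)
            apply mul_le_mul_of_nonneg_right ?_ (by positivity)
            exact mul_le_mul_of_nonneg_left (hwle x a) (le_of_lt hC)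
        _ = C * σ2⁻¹ * (R + ‖x‖) := by ring
  have hG : (∫ a, ((C * w x a * (-σ2⁻¹)) • innerSL ℝ (x - l • a) : E d →L[ℝ] ℝ) ∂μ)
      = InnerProductSpace.toDual ℝ (E d) (∫ a, u a ∂μ) := by
    apply ContinuousLinearMap.ext
    intro v
    rw [ContinuousLinearMap.integral_apply hF'int, InnerProductSpace.toDual_apply_apply]
    have h1 : ∀ a, (((C * w x a * (-σ2⁻¹)) • innerSL ℝ (x - l • a)) : E d →L[ℝ] ℝ) v
        = (inner ℝ (u a) v : ℝ) := by
      intro a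
      rw [ContinuousLinearMap.smul_apply, innerSL_apply_apply, hudef]
      rw [real_inner_smul_left]
      rw [show l • a - x = -(x - l • a) by abel, inner_neg_left]
      rw [smul_eq_mul]
      ring
    simp_rw [h1]
    calc (∫ a, (inner ℝ (u a) v : ℝ) ∂μ) = ∫ a, (inner ℝ v (u a) : ℝ) ∂μ :=
          integral_congr_ae (Filter.Eventually.of_forall fun a => real_inner_comm _ _)
      _ = (inner ℝ v (∫ a, u a ∂μ) : ℝ) := integral_inner hu_int v
      _ = (inner ℝ (∫ a, u a ∂μ) v : ℝ) := real_inner_comm _ _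
  rw [hG] at key
  have hq : HasGradientAt (fun y => ouDensity μ r y) (∫ a, u a ∂μ) x :=
    hasGradientAt_iff_hasFDerivAt.mpr key
  have hqx : ouDensity μ r x = C * W := by
    have h0 : ouDensity μ r x = ∫ a, C * w x a ∂μ := rfl
    rw [h0, integral_const_mul]
  have hqne : ouDensity μ r x ≠ 0 := by
    rw [hqx]; positivity
  have hlog : HasGradientAt (fun y => Real.log (ouDensity μ r y)) ((C * W)⁻¹ • ∫ a, u a ∂μ) x := by
    rw [hasGradientAt_iff_hasFDerivAt]
    have h := (hq.hasFDerivAt.log hqne)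
    rw [hqx] at h
    convert h using 1
    ext v
    simp [InnerProductSpace.toDual_apply_apply, real_inner_smul_left]
    ext v
    simp [InnerProductSpace.toDual_apply_apply, real_inner_smul_left]
  rw [hlog.gradient]
  -- now the algebra
  have hInt : (∫ a, u a ∂μ) = (C * σ2⁻¹) • (l • M - W • x) := by
    have hfun : u = fun a => (C * σ2⁻¹) • (l • (w x a • a) - w x a • x) := by
      funext a
      rw [hudef]
      match_scalars <;> ring
    rw [hfun]
    rw [integral_smul]
    congr 1
    have h1 : Integrable (fun a => l • (w x a • a)) μ := by
      have := hMint.smul l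
      exact this
    have h2 : Integrable (fun a => w x a • x) μ := (hWint x).smul_const x
    rw [integral_sub h1 h2]
    rw [integral_smul, integral_smul_const]
  rw [hInt]
  have hCne : C ≠ 0 := ne_of_gt hC
  have hWne : W ≠ 0 := ne_of_gt hWpos
  match_scalars <;> (field_simp; try ring)

lemma supNorm_nonneg {d : ℕ} (v : E d) : 0 ≤ supNorm v :=
  Real.iSup_nonneg fun i => abs_nonneg _

lemma coord_le_supNorm {d : ℕ} (v : E d) (i : Fin d) : |v i| ≤ supNorm v :=
  le_ciSup (f := fun j => |v j|) (Set.Finite.bddAbove (Set.finite_range _)) i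

lemma supNorm_le {d : ℕ} [Nonempty (Fin d)] (v : E d) (B : ℝ) (h : ∀ i, |v i| ≤ B) :
    supNorm v ≤ B := ciSup_le h

lemma coord_le_norm {d : ℕ} (v : E d) (i : Fin d) : |v i| ≤ ‖v‖ := by
  rw [EuclideanSpace.norm_eq]
  have h1 : |v i|^2 ≤ ∑ j, ‖v j‖^2 :=
    Finset.single_le_sum (f := fun j => ‖v j‖^2) (fun j _ => by positivity)
      (Finset.mem_univ i) |>.trans_eq' (by rw [Real.norm_eq_abs])
  calc |v i| = Real.sqrt (|v i|^2) := (Real.sqrt_sq (abs_nonneg _)).symm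
    _ ≤ _ := Real.sqrt_le_sqrt h1

lemma norm_le_sqrt_mul {d : ℕ} (v : E d) (B : ℝ) (h : ∀ i, |v i| ≤ B) (hB : 0 ≤ B) :
    ‖v‖ ≤ Real.sqrt d * B := by
  rw [EuclideanSpace.norm_eq]
  rw [show Real.sqrt d * B = Real.sqrt (d * B^2) by
    rw [Real.sqrt_mul (Nat.cast_nonneg d), Real.sqrt_sq hB]]
  apply Real.sqrt_le_sqrt
  calc ∑ i, ‖v i‖^2 ≤ ∑ _i : Fin d, B^2 := by
        apply Finset.sum_le_sum
        intro i _
        rw [Real.norm_eq_abs]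
        nlinarith [h i, abs_nonneg (v i)]
    _ = d * B^2 := by rw [Finset.sum_const]; simp [nsmul_eq_mul]

lemma integral_coord {d : ℕ} (μ : Measure (E d)) (i : Fin d) (f : E d → E d)
    (hf : Integrable f μ) : (∫ a, f a ∂μ) i = ∫ a, f a i ∂μ := by
  have := (EuclideanSpace.proj (𝕜 := ℝ) i).integral_comp_comm hf
  simpa using this.symm

lemma velocity_bound {d : ℕ} (hd : 0 < d) (μ : Measure (E d)) [IsProbabilityMeasure μ]
    (Ks : Set (E d)) (hsupp : μ Ksᶜ = 0)
    (D : ℝ) (hD1 : 1 ≤ D) (hDb : ∀ a ∈ Ks, ∀ i, |a i| ≤ D - 1)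
    (τ r : ℝ) (hτ : 0 < τ) (hr : τ ≤ r) (x : E d) :
    supNorm (x + gradient (fun y => Real.log (ouDensity μ r y)) x)
      ≤ τ⁻¹ * (D + 2 * supNorm x) ∧
    ‖x + gradient (fun y => Real.log (ouDensity μ r y)) x‖
      ≤ 2 * τ⁻¹ * (Real.sqrt d * D + ‖x‖) := by
  haveI : Nonempty (Fin d) := ⟨⟨0, hd⟩⟩
  have hr0 : 0 < r := lt_of_lt_of_le hτ hr
  have hae : ∀ᵐ a ∂μ, a ∈ Ks := by
    rw [MeasureTheory.ae_iff]
    exact hsupp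
  have hD0 : 0 ≤ D - 1 := by linarith
  have hR : ∀ᵐ a ∂μ, ‖a‖ ≤ Real.sqrt d * (D - 1) := by
    filter_upwards [hae] with a haK
    exact norm_le_sqrt_mul a (D-1) (hDb a haK) hD0
  obtain ⟨W, M, hWpos, hWeq, hMeq, hMint, hwint, hgrad⟩ :=
    grad_log_ou μ r hr0 (Real.sqrt d * (D - 1)) hR x
  set σ2 : ℝ := 1 - Real.exp (-(2*r)) with hσ2def
  have hσ2 : 0 < σ2 := sigma2_pos hr0
  have hσ2le : σ2 ≤ 1 := by
    have := Real.exp_pos (-(2*r)); simp only [hσ2def]; linarith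
  set l : ℝ := Real.exp (-r) with hldef
  have hl0 : 0 < l := Real.exp_pos _
  -- scalar estimates
  have hs1 : σ2⁻¹ - 1 ≤ (2*τ)⁻¹ := by
    have hee : Real.exp (-(2*r)) * Real.exp (2*r) = 1 := by
      rw [← Real.exp_add]; simp
    have h1 : 2*τ ≤ Real.exp (2*r) - 1 := by
      nlinarith [Real.add_one_le_exp (2*r)]
    have h2 : σ2⁻¹ - 1 = (Real.exp (2*r) - 1)⁻¹ := by
      rw [hσ2def, Real.exp_neg]
      have hE1 : 1 < Real.exp (2*r) := by rw [Real.one_lt_exp_iff]; linarith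
      have hEne : Real.exp (2*r) ≠ 0 := by positivity
      have h3 : Real.exp (2*r) - 1 ≠ 0 := by linarith
      have h4 : 1 - (Real.exp (2*r))⁻¹ ≠ 0 := by
        have : (Real.exp (2*r))⁻¹ < 1 := by
          rw [inv_lt_one_iff₀]; right; exact hE1
        linarith
      field_simp
      try ring
    rw [h2]
    apply inv_anti₀ (by linarith) h1
  have hs2 : σ2⁻¹ * l ≤ (2*τ)⁻¹ := by
    have hsinh : 2 * r ≤ Real.exp r - Real.exp (-r) := by
      have h := Real.self_lt_sinh_iff.mpr hr0
      rw [Real.sinh_eq] at h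
      linarith
    have h2 : σ2⁻¹ * l = (Real.exp r - Real.exp (-r))⁻¹ := by
      rw [hσ2def, hldef]
      have hee : Real.exp (-r) * Real.exp r = 1 := by rw [← Real.exp_add]; simp
      have hee2 : Real.exp (-(2*r)) = Real.exp (-r) * Real.exp (-r) := by
        rw [← Real.exp_add]; ring_nf
      have hne1 : (1:ℝ) - Real.exp (-(2*r)) ≠ 0 := ne_of_gt (sigma2_pos hr0)
      have hne2 : Real.exp r - Real.exp (-r) ≠ 0 := by
        have h := Real.self_lt_sinh_iff.mpr hr0
        rw [Real.sinh_eq] at h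
        have : 0 < Real.exp r - Real.exp (-r) := by linarith
        exact ne_of_gt this
      field_simp
      nlinarith [Real.exp_pos r, Real.exp_pos (-r)]
    rw [h2]
    apply inv_anti₀ (by linarith) (by linarith)
  have hσinv1 : 1 ≤ σ2⁻¹ := by
    have := inv_anti₀ hσ2 hσ2le
    simpa using this
  -- bound the mean vector m
  set m : E d := W⁻¹ • M with hmdef
  have hmb : ∀ i, |m i| ≤ D - 1 := by
    intro i
    have hMi : M i = ∫ a, Real.exp (-‖x - l • a‖ ^ 2 / (2 * σ2)) * a i ∂μ := by
      rw [hMeq]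
      rw [integral_coord μ i _ hMint]
      rfl
    have hMib : |M i| ≤ (D - 1) * W := by
      rw [hMi]
      have hb := norm_integral_le_of_norm_le (μ := μ)
        (f := fun a => Real.exp (-‖x - l • a‖ ^ 2 / (2 * σ2)) * a i)
        (g := fun a => Real.exp (-‖x - l • a‖ ^ 2 / (2 * σ2)) * (D - 1))
        (hwint.mul_const (D-1)) ?_
      · rw [Real.norm_eq_abs] at hb
        calc |∫ a, Real.exp (-‖x - l • a‖ ^ 2 / (2 * σ2)) * a i ∂μ|
            ≤ ∫ a, Real.exp (-‖x - l • a‖ ^ 2 / (2 * σ2)) * (D - 1) ∂μ := hb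
          _ = (D - 1) * W := by
              rw [hWeq]
              rw [← integral_const_mul]
              apply integral_congr_ae
              filter_upwards with a
              ring
      · filter_upwards [hae] with a haK
        rw [Real.norm_eq_abs, abs_mul, abs_of_pos (Real.exp_pos _)]
        exact mul_le_mul_of_nonneg_left (hDb a haK i) (le_of_lt (Real.exp_pos _))
    calc |m i| = W⁻¹ * |M i| := by
          rw [hmdef]
          rw [show (W⁻¹ • M) i = W⁻¹ * M i from rfl, abs_mul,
            abs_of_pos (by positivity : (0:ℝ) < W⁻¹)]
      _ ≤ W⁻¹ * ((D-1) * W) := by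
          apply mul_le_mul_of_nonneg_left hMib (by positivity)
      _ = D - 1 := by field_simp
  have hmnorm : ‖m‖ ≤ Real.sqrt d * (D - 1) := norm_le_sqrt_mul m (D-1) hmb hD0
  -- decompose V
  have hdecomp : x + gradient (fun y => Real.log (ouDensity μ r y)) x
      = (1 - σ2⁻¹) • x + (σ2⁻¹ * l) • m := by
    rw [hgrad]
    match_scalars <;> ring
  have hscal : σ2⁻¹ - 1 ≤ (2*τ)⁻¹ ∧ 0 ≤ σ2⁻¹ - 1 := ⟨hs1, by linarith⟩
  constructor
  · apply supNorm_le
    intro i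
    rw [hdecomp]
    have hco : ((1 - σ2⁻¹) • x + (σ2⁻¹ * l) • m) i = (1 - σ2⁻¹) * x i + (σ2⁻¹ * l) * m i := rfl
    rw [hco]
    have hxi := coord_le_supNorm x i
    have hmi := hmb i
    have hsx := supNorm_nonneg x
    have h1 : |(1 - σ2⁻¹) * x i + (σ2⁻¹ * l) * m i|
        ≤ (σ2⁻¹ - 1) * supNorm x + (σ2⁻¹ * l) * (D - 1) := by
      calc |(1 - σ2⁻¹) * x i + (σ2⁻¹ * l) * m i|
          ≤ |(1 - σ2⁻¹) * x i| + |(σ2⁻¹ * l) * m i| := abs_add_le _ _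
        _ ≤ (σ2⁻¹ - 1) * supNorm x + (σ2⁻¹ * l) * (D - 1) := by
            rw [abs_mul, abs_mul]
            apply add_le_add
            · rw [abs_of_nonpos (by linarith : 1 - σ2⁻¹ ≤ 0), neg_sub]
              apply mul_le_mul_of_nonneg_left hxi (by linarith)
            · rw [abs_of_pos (by positivity : (0:ℝ) < σ2⁻¹ * l)]
              exact mul_le_mul_of_nonneg_left hmi (by positivity)
    have h2τ : (0:ℝ) < (2*τ)⁻¹ := by positivity
    have hτi : (2*τ)⁻¹ * 2 = τ⁻¹ := by field_simp
    calc |(1 - σ2⁻¹) * x i + (σ2⁻¹ * l) * m i|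
        ≤ (σ2⁻¹ - 1) * supNorm x + (σ2⁻¹ * l) * (D - 1) := h1
      _ ≤ (2*τ)⁻¹ * supNorm x + (2*τ)⁻¹ * (D - 1) := by
          apply add_le_add
          · exact mul_le_mul_of_nonneg_right hs1 hsx
          · exact mul_le_mul_of_nonneg_right hs2 hD0
      _ ≤ τ⁻¹ * (D + 2 * supNorm x) := by
          have hτ2 : (2*τ)⁻¹ = τ⁻¹ / 2 := by field_simp
          rw [hτ2]
          have hτpos : (0:ℝ) < τ⁻¹ := by positivity
          nlinarith
  · rw [hdecomp]
    have hd0 : (0:ℝ) ≤ Real.sqrt d := Real.sqrt_nonneg _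
    calc ‖(1 - σ2⁻¹) • x + (σ2⁻¹ * l) • m‖
        ≤ ‖(1 - σ2⁻¹) • x‖ + ‖(σ2⁻¹ * l) • m‖ := norm_add_le _ _
      _ = (σ2⁻¹ - 1) * ‖x‖ + (σ2⁻¹ * l) * ‖m‖ := by
          rw [norm_smul, norm_smul, Real.norm_eq_abs, Real.norm_eq_abs,
            abs_of_nonpos (by linarith : 1 - σ2⁻¹ ≤ 0), abs_of_pos (by positivity : (0:ℝ) < σ2⁻¹ * l)]
          ring
      _ ≤ (2*τ)⁻¹ * ‖x‖ + (2*τ)⁻¹ * (Real.sqrt d * (D - 1)) := by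
          apply add_le_add
          · exact mul_le_mul_of_nonneg_right hs1 (norm_nonneg x)
          · calc (σ2⁻¹ * l) * ‖m‖ ≤ (σ2⁻¹ * l) * (Real.sqrt d * (D-1)) :=
                  mul_le_mul_of_nonneg_left hmnorm (by positivity)
              _ ≤ (2*τ)⁻¹ * (Real.sqrt d * (D-1)) :=
                  mul_le_mul_of_nonneg_right hs2 (by positivity)
      _ ≤ 2 * τ⁻¹ * (Real.sqrt d * D + ‖x‖) := by
          have hτ2 : (2*τ)⁻¹ = τ⁻¹ / 2 := by field_simp
          rw [hτ2]
          have hτpos : (0:ℝ) < τ⁻¹ := by positivity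
          have hh1 : (0:ℝ) ≤ τ⁻¹ * ‖x‖ := by positivity
          have hh2 : (0:ℝ) ≤ τ⁻¹ * (Real.sqrt d * D) := by
            apply mul_nonneg hτpos.le (mul_nonneg hd0 (by linarith))
          have hh3 : (0:ℝ) ≤ τ⁻¹ * Real.sqrt d := by positivity
          nlinarith [hh1, hh2, hh3]

lemma rk_bound {d : ℕ} (V : ℕ → E d → E d) (a : ℕ → ℕ → ℝ) (H Ap : ℝ)
    (hH : 0 ≤ H) (hAp : 0 ≤ Ap) (ha : ∀ j k, |a j k| ≤ Ap)
    (N : E d → ℝ) (hN0 : ∀ v, 0 ≤ N v) (hNadd : ∀ v w, N (v + w) ≤ N v + N w)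
    (hNsmul : ∀ (c : ℝ) (v : E d), N (c • v) ≤ |c| * N v)
    (b0 γ : ℝ) (hb0 : 0 ≤ b0) (hγ : 0 ≤ γ)
    (hV : ∀ j y, N (V j y) ≤ b0 + γ * N y) (x : E d) :
    (∀ n, ∑ i ∈ Finset.range n, N (rkStage V a H i x)
      ≤ n * (b0 + γ * N x) * (1 + γ * Ap * H) ^ (n - 1)) ∧
    (∀ j, N (rkStage V a H j x) ≤ (b0 + γ * N x)
      + γ * Ap * H * (∑ i ∈ Finset.range j, N (rkStage V a H i x))) := by
  have hNzero : N 0 ≤ 0 := by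
    have h := hNsmul 0 0
    simpa using h
  have hsum_le : ∀ {ι : Type} (s : Finset ι) (f : ι → E d),
      N (∑ i ∈ s, f i) ≤ ∑ i ∈ s, N (f i) := by
    intro ι s f
    classical
    induction s using Finset.cons_induction with
    | empty => simpa using hNzero
    | cons i s hi ih =>
        rw [Finset.sum_cons, Finset.sum_cons]
        exact (hNadd _ _).trans (add_le_add_right ih _)
  set b : ℝ := b0 + γ * N x with hbdef
  have hb : 0 ≤ b := by
    have := hN0 x
    have : 0 ≤ γ * N x := mul_nonneg hγ (hN0 x)
    linarith
  set β : ℝ := γ * Ap * H with hβdef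
  have hβ : 0 ≤ β := by positivity
  set S : ℕ → ℝ := fun n => ∑ i ∈ Finset.range n, N (rkStage V a H i x) with hSdef
  have hS0 : ∀ n, 0 ≤ S n := fun n => Finset.sum_nonneg fun i _ => hN0 _
  have hstage : ∀ j, N (rkStage V a H j x) ≤ b + β * S j := by
    intro j
    have harg : N (x + H • ∑ kk : Fin j, a j kk • rkStage V a H kk x)
        ≤ N x + H * (Ap * S j) := by
      have h1 : N (∑ kk : Fin j, a j kk • rkStage V a H kk x)
          ≤ Ap * S j := by
        calc N (∑ kk : Fin j, a j kk • rkStage V a H kk x)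
            ≤ ∑ kk : Fin j, N (a j kk • rkStage V a H kk x) := hsum_le _ _
          _ ≤ ∑ kk : Fin j, Ap * N (rkStage V a H kk x) := by
              apply Finset.sum_le_sum
              intro kk _
              exact (hNsmul _ _).trans (mul_le_mul_of_nonneg_right (ha j kk) (hN0 _))
          _ = Ap * S j := by
              rw [hSdef, Finset.mul_sum]
              exact Fin.sum_univ_eq_sum_range (fun kk => Ap * N (rkStage V a H kk x)) j
      calc N (x + H • ∑ kk : Fin j, a j kk • rkStage V a H kk x)
          ≤ N x + N (H • ∑ kk : Fin j, a j kk • rkStage V a H kk x) := hNadd _ _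
        _ ≤ N x + |H| * N (∑ kk : Fin j, a j kk • rkStage V a H kk x) := by
            exact add_le_add_right (hNsmul _ _) _
        _ ≤ N x + H * (Ap * S j) := by
            rw [abs_of_nonneg hH]
            exact add_le_add_right (mul_le_mul_of_nonneg_left h1 hH) _
    calc N (rkStage V a H j x)
        = N (V j (x + H • ∑ kk : Fin j, a j kk • rkStage V a H kk x)) := by rw [rkStage]
      _ ≤ b0 + γ * N (x + H • ∑ kk : Fin j, a j kk • rkStage V a H kk x) := hV j _
      _ ≤ b0 + γ * (N x + H * (Ap * S j)) := by
          exact add_le_add_right (mul_le_mul_of_nonneg_left harg hγ) _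
      _ = b + β * S j := by rw [hbdef, hβdef]; ring
  have hSrec : ∀ n, S (n+1) ≤ (1 + β) * S n + b := by
    intro n
    have h1 : S (n+1) = S n + N (rkStage V a H n x) := Finset.sum_range_succ _ _
    have h2 := hstage n
    rw [h1]
    nlinarith [hS0 n]
  have hmain : ∀ n, S n ≤ n * b * (1 + β) ^ (n - 1) := by
    intro n
    induction n with
    | zero => simp [hSdef]
    | succ n ih =>
      rcases Nat.eq_zero_or_pos n with h0 | hpos
      · subst h0
        have h1 := hSrec 0
        have h2 : S 0 = 0 := by simp [hSdef]
        rw [h2] at h1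
        simpa using h1
      · have hpow1 : (1:ℝ) ≤ (1 + β) ^ n := one_le_pow₀ (by linarith : (1:ℝ) ≤ 1 + β)
        have hstep : (1 + β) * ((n : ℝ) * b * (1 + β) ^ (n - 1)) = n * b * (1 + β) ^ n := by
          have h : (1 + β) ^ (n - 1) * (1 + β) = (1 + β) ^ n := by
            rw [← pow_succ]
            congr 1
            omega
          rw [← h]; ring
        calc S (n+1) ≤ (1 + β) * S n + b := hSrec n
          _ ≤ (1 + β) * ((n : ℝ) * b * (1 + β) ^ (n - 1)) + b := by
              have h1β : (0:ℝ) ≤ 1 + β := by linarith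
              nlinarith [ih]
          _ = (n : ℝ) * b * (1 + β) ^ n + b := by rw [hstep]
          _ ≤ ((n : ℕ) + 1 : ℝ) * b * (1 + β) ^ n := by nlinarith [mul_nonneg (hb) (by linarith : (0:ℝ) ≤ (1+β)^n - 1)]
          _ = ((n+1 : ℕ) : ℝ) * b * (1 + β) ^ ((n+1) - 1) := by push_cast; simp
  exact ⟨hmain, hstage⟩


/-- sup-norm and Euclidean-norm growth bounds for the Runge–Kutta
stages built from the true reverse velocity field
`V_u(x) = x + ∇ log q_{T-u}(x)` of the OU process. -/
theorem stmt_11 {d s : ℕ} (hd : 0 < d) (hs : 0 < s)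
    (μ : Measure (E d)) (hμ : IsProbabilityMeasure μ)
    (Ks : Set (E d)) (hK : IsCompact Ks) (hsupp : μ Ksᶜ = 0)
    (D : ℝ) (hD : D = 1 + (⨆ x : Ks, supNorm (x : E d)))
    (T τ t H : ℝ) (hτ : τ ∈ Set.Ioo (0 : ℝ) 1) (ht : 0 ≤ t) (hH : 0 < H)
    (htH : t + H ≤ T - τ)
    (Ap : ℝ) (hAp : 1 ≤ Ap) (a : ℕ → ℕ → ℝ) (ha : ∀ j k, |a j k| ≤ Ap)
    (c : ℕ → ℝ) (hc : ∀ j, c j ∈ Set.Icc (0 : ℝ) 1)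
    (barV : ℕ → E d → E d)
    (hbarV : barV = fun j x =>
      x + gradient (fun y => Real.log (ouDensity μ (T - (t + c j * H)) y)) x) :
    (∀ x : E d, ∑ i ∈ Finset.range s, supNorm (rkStage barV a H i x)
        ≤ s * τ⁻¹ * (1 + 2 * τ⁻¹ * Ap * H) ^ (s - 1) * (D + 2 * supNorm x)) ∧
    (∀ x : E d, ∑ i ∈ Finset.range s, ‖rkStage barV a H i x‖
        ≤ 2 * s * τ⁻¹ * (1 + 2 * τ⁻¹ * Ap * H) ^ (s - 1) * (Real.sqrt d * D + ‖x‖)) ∧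
    (H * Ap * 2 ^ s * s * τ⁻¹ ≤ 1 →
      ∀ i < s, ∀ x : E d,
        supNorm (rkStage barV a H i x) ≤ 4 * τ⁻¹ * (supNorm x + D) ∧
        ‖rkStage barV a H i x‖ ≤ 4 * τ⁻¹ * (‖x‖ + Real.sqrt d * D)) := by
  haveI : IsProbabilityMeasure μ := hμ
  haveI hne : Nonempty (Fin d) := ⟨⟨0, hd⟩⟩
  obtain ⟨hτ0, hτ1⟩ := hτ
  have hτi : (0:ℝ) < τ⁻¹ := by positivity
  -- D facts
  have hsupble : ∀ v : E d, supNorm v ≤ ‖v‖ := fun v =>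
    supNorm_le v ‖v‖ (coord_le_norm v)
  obtain ⟨R, hR⟩ := hK.isBounded.exists_norm_le
  have hbdd : BddAbove (Set.range fun x : Ks => supNorm (x : E d)) := by
    refine ⟨R, ?_⟩
    rintro y ⟨⟨z, hz⟩, rfl⟩
    exact (hsupble z).trans (hR z hz)
  have hD1 : 1 ≤ D := by
    rw [hD]
    have : 0 ≤ ⨆ x : Ks, supNorm (x : E d) :=
      Real.iSup_nonneg fun x => supNorm_nonneg _
    linarith
  have hDb : ∀ b ∈ Ks, ∀ i, |b i| ≤ D - 1 := by
    intro b hb i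
    have h1 : supNorm b ≤ ⨆ x : Ks, supNorm (x : E d) :=
      le_ciSup (f := fun x : Ks => supNorm (x : E d)) hbdd ⟨b, hb⟩
    have h2 := coord_le_supNorm b i
    rw [hD]
    linarith
  -- velocity bounds
  have hrge : ∀ j, τ ≤ T - (t + c j * H) := by
    intro j
    obtain ⟨hc0, hc1⟩ := hc j
    have : c j * H ≤ H := by nlinarith
    linarith
  have hV1 : ∀ j y, supNorm (barV j y) ≤ τ⁻¹ * D + 2 * τ⁻¹ * supNorm y := by
    intro j y
    have h := (velocity_bound hd μ Ks hsupp D hD1 hDb τ _ hτ0 (hrge j) y).1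
    rw [hbarV]
    calc supNorm (y + gradient (fun z => Real.log (ouDensity μ (T - (t + c j * H)) z)) y)
        ≤ τ⁻¹ * (D + 2 * supNorm y) := h
      _ = τ⁻¹ * D + 2 * τ⁻¹ * supNorm y := by ring
  have hV2 : ∀ j y, ‖barV j y‖ ≤ 2 * τ⁻¹ * (Real.sqrt d * D) + 2 * τ⁻¹ * ‖y‖ := by
    intro j y
    have h := (velocity_bound hd μ Ks hsupp D hD1 hDb τ _ hτ0 (hrge j) y).2
    rw [hbarV]
    calc ‖y + gradient (fun z => Real.log (ouDensity μ (T - (t + c j * H)) z)) y‖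
        ≤ 2 * τ⁻¹ * (Real.sqrt d * D + ‖y‖) := h
      _ = 2 * τ⁻¹ * (Real.sqrt d * D) + 2 * τ⁻¹ * ‖y‖ := by ring
  -- supNorm structural facts
  have hadd : ∀ v w : E d, supNorm (v + w) ≤ supNorm v + supNorm w := by
    intro v w
    apply supNorm_le
    intro i
    calc |(v + w) i| = |v i + w i| := rfl
      _ ≤ |v i| + |w i| := abs_add_le _ _
      _ ≤ supNorm v + supNorm w := add_le_add (coord_le_supNorm v i) (coord_le_supNorm w i)
  have hsmul : ∀ (r : ℝ) (v : E d), supNorm (r • v) ≤ |r| * supNorm v := by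
    intro r v
    apply supNorm_le
    intro i
    calc |(r • v) i| = |r| * |v i| := by rw [show (r • v) i = r * v i from rfl, abs_mul]
      _ ≤ |r| * supNorm v := mul_le_mul_of_nonneg_left (coord_le_supNorm v i) (abs_nonneg r)
  have hb01 : (0:ℝ) ≤ τ⁻¹ * D := by positivity
  have hb02 : (0:ℝ) ≤ 2 * τ⁻¹ * (Real.sqrt d * D) := by positivity
  have hγ : (0:ℝ) ≤ 2 * τ⁻¹ := by positivity
  have hAp0 : (0:ℝ) ≤ Ap := by linarith
  have hrk1 := fun x => rk_bound barV a H Ap hH.le hAp0 ha supNorm supNorm_nonneg hadd hsmul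
    (τ⁻¹ * D) (2 * τ⁻¹) hb01 hγ hV1 x
  have hrk2 := fun x => rk_bound barV a H Ap hH.le hAp0 ha (fun v => ‖v‖) (fun v => norm_nonneg v)
    (fun v w => norm_add_le v w) (fun r v => le_of_eq (by show ‖r • v‖ = |r| * ‖v‖; rw [norm_smul, Real.norm_eq_abs]))
    (2 * τ⁻¹ * (Real.sqrt d * D)) (2 * τ⁻¹) hb02 hγ hV2 x
  refine ⟨?_, ?_, ?_⟩
  · intro x
    calc ∑ i ∈ Finset.range s, supNorm (rkStage barV a H i x)
        ≤ s * (τ⁻¹ * D + 2 * τ⁻¹ * supNorm x) * (1 + 2 * τ⁻¹ * Ap * H) ^ (s - 1) :=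
          (hrk1 x).1 s
      _ = s * τ⁻¹ * (1 + 2 * τ⁻¹ * Ap * H) ^ (s - 1) * (D + 2 * supNorm x) := by ring
  · intro x
    calc ∑ i ∈ Finset.range s, ‖rkStage barV a H i x‖
        ≤ s * (2 * τ⁻¹ * (Real.sqrt d * D) + 2 * τ⁻¹ * ‖x‖) * (1 + 2 * τ⁻¹ * Ap * H) ^ (s - 1) :=
          (hrk2 x).1 s
      _ = 2 * s * τ⁻¹ * (1 + 2 * τ⁻¹ * Ap * H) ^ (s - 1) * (Real.sqrt d * D + ‖x‖) := by ring
  · intro hsmall i hi x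
    set β : ℝ := 2 * τ⁻¹ * Ap * H with hβdef
    have hβ0 : 0 ≤ β := by positivity
    have h2s : (0:ℝ) < 2 ^ s := by positivity
    have hs1 : (1:ℝ) ≤ (s:ℝ) := by exact_mod_cast hs
    have hβs : β * s ≤ 2 / 2 ^ s := by
      rw [le_div_iff₀ h2s]
      calc β * (s:ℝ) * 2 ^ s = 2 * (H * Ap * 2 ^ s * (s:ℝ) * τ⁻¹) := by rw [hβdef]; ring
        _ ≤ 2 * 1 := by linarith
        _ = 2 := by norm_num
    have h2pow : (2:ℝ) ≤ 2 ^ s := by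
      calc (2:ℝ) = 2 ^ 1 := by norm_num
        _ ≤ 2 ^ s := pow_le_pow_right₀ (by norm_num) hs
    have hdivle : (2:ℝ) / 2 ^ s ≤ 1 := by
      rw [div_le_one h2s]; linarith
    have hβ1 : β ≤ 1 := by
      have h1 : β ≤ β * s := by nlinarith
      linarith [hβs.trans hdivle]
    have hpow : (1 + β) ^ (s - 1) ≤ 2 ^ (s - 1) :=
      pow_le_pow_left₀ (by linarith) (by linarith) _
    have hkey : β * (s:ℝ) * (1 + β) ^ (s - 1) ≤ 1 := by
      have h2 : (2:ℝ) / 2 ^ s * 2 ^ (s - 1) = 1 := by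
        have hss : (2:ℝ) ^ (s - 1) * 2 = 2 ^ s := by
          rw [← pow_succ]
          congr 1
          omega
        field_simp
        linarith [hss]
      calc β * (s:ℝ) * (1 + β) ^ (s - 1)
          ≤ (2 / 2 ^ s) * 2 ^ (s - 1) := by
            apply mul_le_mul hβs hpow (by positivity) (by positivity)
        _ = 1 := h2
    constructor
    · obtain ⟨hsum1, hstage1⟩ := hrk1 x
      set b : ℝ := τ⁻¹ * D + 2 * τ⁻¹ * supNorm x with hbdef
      have hb : 0 ≤ b := by
        rw [hbdef]
        have h1 : 0 ≤ 2 * τ⁻¹ * supNorm x := mul_nonneg hγ (supNorm_nonneg x)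
        linarith
      have hSmono : ∑ k ∈ Finset.range i, supNorm (rkStage barV a H k x)
          ≤ ∑ k ∈ Finset.range s, supNorm (rkStage barV a H k x) :=
        Finset.sum_le_sum_of_subset_of_nonneg
          (Finset.range_subset_range.mpr hi.le) (fun k _ _ => supNorm_nonneg _)
      have hfin : supNorm (rkStage barV a H i x) ≤ b + β * ((s:ℝ) * b * (1 + β) ^ (s - 1)) := by
        have h1 := hstage1 i
        have h2 := hsum1 s
        have h3 : (0:ℝ) ≤ ∑ k ∈ Finset.range i, supNorm (rkStage barV a H k x) :=
          Finset.sum_nonneg fun k _ => supNorm_nonneg _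
        nlinarith [hSmono, h2, h1]
      have hfin2 : b + β * ((s:ℝ) * b * (1 + β) ^ (s - 1)) ≤ 2 * b := by
        have h4 : β * ((s:ℝ) * b * (1 + β) ^ (s - 1)) ≤ 1 * b := by
          calc β * ((s:ℝ) * b * (1 + β) ^ (s - 1))
              = (β * (s:ℝ) * (1 + β) ^ (s - 1)) * b := by ring
            _ ≤ 1 * b := mul_le_mul_of_nonneg_right hkey hb
        linarith
      calc supNorm (rkStage barV a H i x) ≤ 2 * b := hfin.trans hfin2
        _ ≤ 4 * τ⁻¹ * (supNorm x + D) := by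
            rw [hbdef]
            have := supNorm_nonneg x
            nlinarith [hτi]
    · obtain ⟨hsum2, hstage2⟩ := hrk2 x
      set b : ℝ := 2 * τ⁻¹ * (Real.sqrt d * D) + 2 * τ⁻¹ * ‖x‖ with hbdef
      have hb : 0 ≤ b := by
        rw [hbdef]
        have h1 : (0:ℝ) ≤ 2 * τ⁻¹ * ‖x‖ := by positivity
        linarith [hb02]
      have hSmono : ∑ k ∈ Finset.range i, ‖rkStage barV a H k x‖
          ≤ ∑ k ∈ Finset.range s, ‖rkStage barV a H k x‖ :=
        Finset.sum_le_sum_of_subset_of_nonneg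
          (Finset.range_subset_range.mpr hi.le) (fun k _ _ => norm_nonneg _)
      have hfin : ‖rkStage barV a H i x‖ ≤ b + β * ((s:ℝ) * b * (1 + β) ^ (s - 1)) := by
        have h1 := hstage2 i
        have h2 := hsum2 s
        nlinarith [hSmono, h2, h1]
      have hfin2 : b + β * ((s:ℝ) * b * (1 + β) ^ (s - 1)) ≤ 2 * b := by
        have h4 : β * ((s:ℝ) * b * (1 + β) ^ (s - 1)) ≤ 1 * b := by
          calc β * ((s:ℝ) * b * (1 + β) ^ (s - 1))
              = (β * (s:ℝ) * (1 + β) ^ (s - 1)) * b := by ring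
            _ ≤ 1 * b := mul_le_mul_of_nonneg_right hkey hb
        linarith
      calc ‖rkStage barV a H i x‖ ≤ 2 * b := hfin.trans hfin2
        _ = 4 * τ⁻¹ * (‖x‖ + Real.sqrt d * D) := by rw [hbdef]; ring
end

section
/- Let φ_h be the flow of the field V: ∂_h φ_h(x) = V_{t+h}(φ_h(x)) with φ_0(x) = x, where for all h ∈ [0,H] and x ∈ ℝ^d: ‖V_{t+h}(x)‖₂ ≤ W̄⁽⁰⁾ + W̄⁽¹⁾‖x‖₂, ‖∇V_{t+h}(x)‖_op ≤ L̄⁽¹⁾ and ‖∇V_{t+h}(x)‖_∞ ≤ K̄⁽¹⁾. If H(W̄⁽¹⁾ + L̄⁽¹⁾ + dK̄⁽¹⁾) < 1/100, then for every h ≤ H and x ∈ ℝ^d: ‖x − φ_h(x)‖₂ ≤ 4h(W̄⁽⁰⁾ + W̄⁽¹⁾‖x‖₂) and ‖x − φ_h^{−1}(x)‖₂ ≤ 8h(W̄⁽⁰⁾ + W̄⁽¹⁾‖x‖₂); ‖∇φ_h(x) − I_d‖_op ≤ 4L̄⁽¹⁾h and ‖(∇φ_h^{−1})(x) − I_d‖_op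 ≤ 8L̄⁽¹⁾h; ‖∇φ_h(x) − I_d‖_∞ ≤ 2K̄⁽¹⁾h and ‖(∇φ_h^{−1})(x) − I_d‖_∞ ≤ 4K̄⁽¹⁾h; and 0 < e^{−8K̄⁽¹⁾hd} ≤ det[∇φ_h(x)] ≤ e^{4K̄⁽¹⁾hd} and 0 < e^{−4K̄⁽¹⁾hd} ≤ det[∇φ_h^{−1}(x)] ≤ e^{8K̄⁽¹⁾hd}. -/
/-- Jacobian matrix of `F` at `x` (row `q`, column `l` is `∂_l F^{(q)}(x)`). -/
noncomputable def jacMatrix {d : ℕ} (F : E d → E d) (x : E d) :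
    Matrix (Fin d) (Fin d) ℝ :=
  fun q l => jacEntry F x l q

namespace Stmt14
open Filter Finset

/-! ### numeric lemmas -/

lemma exp_le_inv_one_sub {u : ℝ} (h1 : u < 1) : Real.exp u ≤ (1 - u)⁻¹ := by
  have h2 : 1 - u ≤ Real.exp (-u) := by linarith [Real.add_one_le_exp (-u)]
  have h3 : 0 < 1 - u := by linarith
  rw [Real.exp_neg] at h2
  calc Real.exp u = ((Real.exp u)⁻¹)⁻¹ := by rw [inv_inv]
    _ ≤ (1-u)⁻¹ := inv_anti₀ h3 h2

lemma exp_sub_one_le_two_mul {u : ℝ} (h0 : 0 ≤ u) (h1 : u ≤ 1/2) : Real.exp u - 1 ≤ 2*u := by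
  have h2 : Real.exp u ≤ (1 - u)⁻¹ := exp_le_inv_one_sub (by linarith)
  have h3 : (0:ℝ) < 1 - u := by linarith
  have h4 : (1 - u)⁻¹ ≤ 1 + 2*u := by
    rw [inv_le_iff_one_le_mul₀ h3]
    nlinarith
  linarith

lemma exp_det_bounds {w D : ℝ} (hw0 : 0 ≤ w) (hw : w ≤ 1/50) (hD : |D - 1| ≤ 2*w) :
    0 < D ∧ Real.exp (-(4*w)) ≤ D ∧ D ≤ Real.exp (2*w) := by
  have habs := abs_le.mp hD
  have hDl : 1 - 2*w ≤ D := by linarith [habs.1]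
  have hDu : D ≤ 1 + 2*w := by linarith [habs.2]
  have hpos : 0 < D := by linarith
  refine ⟨hpos, ?_, ?_⟩
  · have h1 : (1 + 4*w : ℝ) ≤ Real.exp (4*w) := by linarith [Real.add_one_le_exp (4*w)]
    have h2 : Real.exp (-(4*w)) ≤ (1 + 4*w)⁻¹ := by
      rw [Real.exp_neg]
      exact inv_anti₀ (by linarith) h1
    have h3 : (1 + 4*w : ℝ)⁻¹ ≤ 1 - 2*w := by
      rw [inv_le_iff_one_le_mul₀ (by linarith)]
      nlinarith
    linarith
  · have h1 : (1 + 2*w : ℝ) ≤ Real.exp (2*w) := by linarith [Real.add_one_le_exp (2*w)]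
    linarith

/-! ### basis decomposition and matrices of CLMs -/

lemma euclid_sum_single {d : ℕ} (v : E d) :
    ∑ j, v j • EuclideanSpace.single j (1:ℝ) = v := by
  ext i
  have : (∑ j, v j • EuclideanSpace.single j (1:ℝ)) i
      = ∑ j, (v j • EuclideanSpace.single j (1:ℝ)) i :=
    by rw [WithLp.ofLp_sum, Finset.sum_apply]
  rw [this]
  simp [EuclideanSpace.single_apply]

/-- matrix of a continuous linear map in the standard basis -/
noncomputable def matOf {d : ℕ} (T : E d →L[ℝ] E d) : Matrix (Fin d) (Fin d) ℝ :=
  fun q l => T (EuclideanSpace.single l 1) q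

lemma matOf_comp {d : ℕ} (T S : E d →L[ℝ] E d) : matOf (T.comp S) = matOf T * matOf S := by
  ext q l
  rw [Matrix.mul_apply]
  show T (S (EuclideanSpace.single l 1)) q = _
  conv_lhs => rw [← euclid_sum_single (S (EuclideanSpace.single l 1))]
  rw [map_sum]
  have : (∑ j, T (S (EuclideanSpace.single l 1) j • EuclideanSpace.single j (1:ℝ))) q
      = ∑ j, (T (S (EuclideanSpace.single l 1) j • EuclideanSpace.single j (1:ℝ))) q :=
    by rw [WithLp.ofLp_sum, Finset.sum_apply]
  rw [this]
  refine Finset.sum_congr rfl fun j _ => ?_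
  rw [map_smul]
  exact mul_comm _ _

lemma matOf_id {d : ℕ} : matOf (ContinuousLinearMap.id ℝ (E d)) = 1 := by
  ext q l
  show (EuclideanSpace.single l (1:ℝ)) q = _
  rw [EuclideanSpace.single_apply, Matrix.one_apply]

/-! ### determinant bound -/

lemma units_int_smul_abs (u : ℤˣ) (x : ℝ) : |u • x| = |x| := by
  rcases Int.units_eq_one_or u with h | h <;> subst h <;>
    simp [Units.smul_def]

lemma abs_prod_sub_one_le {ι : Type*} (s : Finset ι) (f : ι → ℝ) (ε : ℝ) (hε : 0 ≤ ε)
    : (∀ i ∈ s, |f i - 1| ≤ ε) → |∏ i ∈ s, f i - 1| ≤ (1+ε)^s.card - 1 := by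
  classical
  refine Finset.induction_on s (fun _ => by simp) ?_
  intro a s ha ih h
  rw [Finset.prod_insert ha, Finset.card_insert_of_notMem ha]
  have hfa : |f a - 1| ≤ ε := h a (Finset.mem_insert_self _ _)
  have hP : |∏ i ∈ s, f i - 1| ≤ (1+ε)^s.card - 1 :=
    ih (fun i hi => h i (Finset.mem_insert_of_mem hi))
  have habs : |f a| ≤ 1 + ε := by
    have := abs_sub_abs_le_abs_sub (f a) 1
    rw [abs_one] at this; linarith
  have hpow : (1:ℝ) ≤ (1+ε)^s.card := one_le_pow₀ (by linarith)
  calc |f a * ∏ i ∈ s, f i - 1| = |f a * (∏ i ∈ s, f i - 1) + (f a - 1)| := by ring_nf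
    _ ≤ |f a * (∏ i ∈ s, f i - 1)| + |f a - 1| := abs_add_le _ _
    _ = |f a| * |∏ i ∈ s, f i - 1| + |f a - 1| := by rw [abs_mul]
    _ ≤ (1+ε) * ((1+ε)^s.card - 1) + ε := by
        have h1 : (0:ℝ) ≤ 1 + ε := by linarith
        have := mul_le_mul habs hP (abs_nonneg _) h1
        linarith
    _ = (1+ε)^(s.card+1) - 1 := by ring

lemma fiber_card_le {d : ℕ} (T : Finset (Fin d)) :
    ((Finset.univ.erase (1 : Equiv.Perm (Fin d))).filter
      (fun σ => Equiv.Perm.support σ = T)).card ≤ Nat.factorial T.card := by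
  classical
  have h1 : ∀ σ : Equiv.Perm (Fin d), σ.support ⊆ T → ∀ x, x ∈ T ↔ σ x ∈ T := by
    intro σ hs x
    constructor
    · intro hx
      by_cases hfix : σ x = x
      · rwa [hfix]
      · exact hs (Equiv.Perm.apply_mem_support.mpr (Equiv.Perm.mem_support.mpr hfix))
    · intro hx
      by_cases hfix : σ x = x
      · rwa [← hfix]
      · exact hs (Equiv.Perm.mem_support.mpr hfix)
  set F : Equiv.Perm (Fin d) → Equiv.Perm {x // x ∈ T} := fun σ =>
    if hσ : σ.support ⊆ T then σ.subtypePerm (fun x => (h1 σ hσ x).symm) else 1 with hF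
  have hcard : (Finset.univ : Finset (Equiv.Perm {x // x ∈ T})).card = Nat.factorial T.card := by
    rw [Finset.card_univ, Fintype.card_perm, Fintype.card_coe]
  rw [← hcard]
  apply Finset.card_le_card_of_injOn F (fun σ _ => Finset.mem_univ _)
  intro σ hσ τ hτ hFστ
  rw [Finset.mem_coe, Finset.mem_filter] at hσ hτ
  have hσT : σ.support = T := hσ.2
  have hτT : τ.support = T := hτ.2
  have hσs : σ.support ⊆ T := hσT.le
  have hτs : τ.support ⊆ T := hτT.le
  rw [hF] at hFστ
  simp only [dif_pos hσs, dif_pos hτs] at hFστ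
  ext x
  by_cases hx : x ∈ T
  · have := congrArg (fun (ρ : Equiv.Perm {x // x ∈ T}) => (ρ ⟨x, hx⟩ : {x // x ∈ T}).val) hFστ
    have h2 : σ x = τ x := by simpa [Equiv.Perm.subtypePerm_apply] using this
    exact congrArg _ h2
  · have h1 : σ x = x := by
      rw [← Equiv.Perm.notMem_support] at *
      exact fun hc => hx (hσs hc)
    have h2 : τ x = x := by
      rw [← Equiv.Perm.notMem_support] at *
      exact fun hc => hx (hτs hc)
    rw [h1, h2]

lemma geom_tail_le {u : ℝ} (h0 : 0 ≤ u) (h1 : u ≤ 1/50) (d : ℕ) :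
    ∑ j ∈ range (d+1), (if 2 ≤ j then u^j else 0) ≤ 2 * u^2 := by
  have hfil : (range (d+1)).filter (fun j => 2 ≤ j) = Finset.Ico 2 (d+1) := by
    ext j; simp [Finset.mem_Ico, Nat.lt_succ_iff]; omega
  rw [← Finset.sum_filter, hfil]
  by_cases h2 : 2 ≤ d + 1
  · have hu1 : u ≠ 1 := by intro h; rw [h] at h1; norm_num at h1
    rw [geom_sum_Ico' hu1 h2]
    have hpos : (0:ℝ) < 1 - u := by linarith
    have hnn : (0:ℝ) ≤ u^(d+1) := pow_nonneg h0 _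
    rw [div_le_iff₀ hpos]
    nlinarith [pow_nonneg h0 2]
  · have hd : d = 0 := by omega
    subst hd
    rw [Finset.Ico_eq_empty (by omega), Finset.sum_empty]
    positivity

lemma det_bound {d : ℕ} (A : Matrix (Fin d) (Fin d) ℝ) {ε : ℝ} (hε : 0 ≤ ε)
    (hA : ∀ q l, |A q l - (1 : Matrix (Fin d) (Fin d) ℝ) q l| ≤ ε)
    (hsm : (d:ℝ) * ε ≤ 1/50) :
    |A.det - 1| ≤ 2 * ((d:ℝ) * ε) := by
  classical
  set u : ℝ := (d:ℝ) * ε with hu_def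
  have hu0 : 0 ≤ u := mul_nonneg (Nat.cast_nonneg d) hε
  have hdiag : ∀ i, |A i i - 1| ≤ ε := fun i => by
    have := hA i i; rwa [Matrix.one_apply_eq] at this
  have hoff : ∀ i j, i ≠ j → |A i j| ≤ ε := fun i j hij => by
    have := hA i j; rwa [Matrix.one_apply_ne hij, sub_zero] at this
  have h1 : |∏ i, A i i - 1| ≤ (1+ε)^d - 1 := by
    have := abs_prod_sub_one_le Finset.univ (fun i => A i i) ε hε (fun i _ => hdiag i)
    simpa [Finset.card_univ] using this
  have hexp : (1+ε)^d ≤ Real.exp u := by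
    have e1 : (1+ε : ℝ) ≤ Real.exp ε := by linarith [Real.add_one_le_exp ε]
    calc (1+ε)^d ≤ (Real.exp ε)^d := pow_le_pow_left₀ (by linarith) e1 d
      _ = Real.exp u := by rw [← Real.exp_nat_mul]
  have hterm : ∀ σ : Equiv.Perm (Fin d), σ ≠ 1 →
      |∏ i, A (σ i) i| ≤ (1+ε)^d * ε ^ (Equiv.Perm.support σ).card := by
    intro σ hσ
    rw [Finset.abs_prod]
    have step1 : ∏ i, |A (σ i) i| ≤ ∏ i, (if σ i = i then 1+ε else ε) := by
      apply Finset.prod_le_prod (fun i _ => abs_nonneg _)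
      intro i _
      by_cases hi : σ i = i
      · rw [if_pos hi, hi]
        have := abs_sub_abs_le_abs_sub (A i i) 1
        rw [abs_one] at this; linarith [hdiag i]
      · rw [if_neg hi]; exact hoff _ _ hi
    have step2 : ∏ i, (if σ i = i then 1+ε else ε)
        = (∏ i ∈ σ.support, (if σ i = i then 1+ε else ε)) *
          (∏ i ∈ σ.supportᶜ, (if σ i = i then 1+ε else ε)) :=
      (Finset.prod_mul_prod_compl _ _).symm
    have s1 : ∏ i ∈ σ.support, (if σ i = i then 1+ε else ε) = ε ^ (σ.support.card) := by
      rw [Finset.prod_congr rfl (fun i hi => if_neg (Equiv.Perm.mem_support.mp hi)),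
        Finset.prod_const]
    have s2 : ∏ i ∈ σ.supportᶜ, (if σ i = i then 1+ε else ε) = (1+ε) ^ (σ.supportᶜ.card) := by
      rw [Finset.prod_congr rfl
        (fun i hi => if_pos (Equiv.Perm.notMem_support.mp (Finset.mem_compl.mp hi))),
        Finset.prod_const]
    have s3 : (1+ε : ℝ) ^ (σ.supportᶜ.card) ≤ (1+ε)^d := by
      apply pow_le_pow_right₀ (by linarith)
      calc σ.supportᶜ.card ≤ (Finset.univ : Finset (Fin d)).card := Finset.card_le_univ _
        _ = d := by simp
    calc ∏ i, |A (σ i) i| ≤ ∏ i, (if σ i = i then 1+ε else ε) := step1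
      _ = ε ^ (σ.support.card) * (1+ε) ^ (σ.supportᶜ.card) := by rw [step2, s1, s2]
      _ ≤ ε ^ (σ.support.card) * (1+ε)^d := by
          exact mul_le_mul_of_nonneg_left s3 (pow_nonneg hε _)
      _ = (1+ε)^d * ε ^ (σ.support.card) := mul_comm _ _
  have hcount : ∑ σ ∈ Finset.univ.erase (1 : Equiv.Perm (Fin d)),
      (ε ^ (Equiv.Perm.support σ).card) ≤ 2 * u^2 := by
    have hmaps : ∀ σ ∈ Finset.univ.erase (1 : Equiv.Perm (Fin d)),
        Equiv.Perm.support σ ∈ (Finset.univ : Finset (Fin d)).powerset.filter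
          (fun T => 2 ≤ T.card) := by
      intro σ hσ
      rw [Finset.mem_filter, Finset.mem_powerset]
      exact ⟨Finset.subset_univ _,
        Equiv.Perm.one_lt_card_support_of_ne_one (Finset.mem_erase.mp hσ).1⟩
    rw [← Finset.sum_fiberwise_of_maps_to hmaps (fun σ => ε ^ (Equiv.Perm.support σ).card)]
    have inner : ∀ T ∈ (Finset.univ : Finset (Fin d)).powerset.filter (fun T => 2 ≤ T.card),
        ∑ σ ∈ (Finset.univ.erase (1 : Equiv.Perm (Fin d))).filter
          (fun σ => Equiv.Perm.support σ = T), ε ^ (Equiv.Perm.support σ).card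
          ≤ (Nat.factorial T.card : ℝ) * ε ^ T.card := by
      intro T _
      have : ∀ σ ∈ (Finset.univ.erase (1 : Equiv.Perm (Fin d))).filter
          (fun σ => Equiv.Perm.support σ = T), ε ^ (Equiv.Perm.support σ).card = ε ^ T.card := by
        intro σ hσ
        rw [(Finset.mem_filter.mp hσ).2]
      rw [Finset.sum_congr rfl this, Finset.sum_const, nsmul_eq_mul]
      apply mul_le_mul_of_nonneg_right _ (pow_nonneg hε _)
      exact_mod_cast fiber_card_le T
    calc _ ≤ ∑ T ∈ (Finset.univ : Finset (Fin d)).powerset.filter (fun T => 2 ≤ T.card),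
        (Nat.factorial T.card : ℝ) * ε ^ T.card := Finset.sum_le_sum inner
      _ = ∑ T ∈ (Finset.univ : Finset (Fin d)).powerset,
          (if 2 ≤ T.card then (Nat.factorial T.card : ℝ) * ε ^ T.card else 0) :=
        Finset.sum_filter _ _
      _ = ∑ j ∈ range (d+1), ∑ T ∈ Finset.powersetCard j (Finset.univ : Finset (Fin d)),
          (if 2 ≤ T.card then (Nat.factorial T.card : ℝ) * ε ^ T.card else 0) := by
        rw [Finset.sum_powerset]
        simp
      _ = ∑ j ∈ range (d+1), (d.choose j) •
          (if 2 ≤ j then (Nat.factorial j : ℝ) * ε ^ j else 0) := by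
        apply Finset.sum_congr rfl
        intro j _
        have := Finset.sum_powersetCard j (Finset.univ : Finset (Fin d))
          (fun n => if 2 ≤ n then (Nat.factorial n : ℝ) * ε ^ n else 0)
        simpa using this
      _ ≤ ∑ j ∈ range (d+1), (if 2 ≤ j then u^j else 0) := by
        apply Finset.sum_le_sum
        intro j _
        by_cases h2 : 2 ≤ j
        · rw [if_pos h2, if_pos h2, nsmul_eq_mul, ← mul_assoc]
          have hdesc : (d.choose j : ℝ) * (Nat.factorial j : ℝ) ≤ (d:ℝ)^j := by
            have h3 : d.choose j * Nat.factorial j ≤ d^j := by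
              rw [mul_comm, ← Nat.descFactorial_eq_factorial_mul_choose]
              exact Nat.descFactorial_le_pow d j
            exact_mod_cast h3
          calc (d.choose j : ℝ) * (Nat.factorial j : ℝ) * ε ^ j ≤ (d:ℝ)^j * ε^j :=
              mul_le_mul_of_nonneg_right hdesc (pow_nonneg hε _)
            _ = u^j := by rw [← mul_pow]
        · rw [if_neg h2, if_neg h2, smul_zero]
      _ ≤ 2 * u^2 := geom_tail_le hu0 hsm d
  have hdecomp : A.det = (∏ i, A i i) +
      ∑ σ ∈ Finset.univ.erase (1 : Equiv.Perm (Fin d)),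
        Equiv.Perm.sign σ • ∏ i, A (σ i) i := by
    rw [Matrix.det_apply,
      ← Finset.add_sum_erase _ _ (Finset.mem_univ (1 : Equiv.Perm (Fin d)))]
    simp
  have habs2 : |∑ σ ∈ Finset.univ.erase (1 : Equiv.Perm (Fin d)),
      Equiv.Perm.sign σ • ∏ i, A (σ i) i| ≤ (1+ε)^d * (2 * u^2) := by
    calc |∑ σ ∈ Finset.univ.erase (1 : Equiv.Perm (Fin d)),
        Equiv.Perm.sign σ • ∏ i, A (σ i) i|
        ≤ ∑ σ ∈ Finset.univ.erase (1 : Equiv.Perm (Fin d)),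
          |Equiv.Perm.sign σ • ∏ i, A (σ i) i| := Finset.abs_sum_le_sum_abs _ _
      _ = ∑ σ ∈ Finset.univ.erase (1 : Equiv.Perm (Fin d)), |∏ i, A (σ i) i| := by
          exact Finset.sum_congr rfl (fun σ _ => units_int_smul_abs _ _)
      _ ≤ ∑ σ ∈ Finset.univ.erase (1 : Equiv.Perm (Fin d)),
          (1+ε)^d * ε ^ (Equiv.Perm.support σ).card := by
          apply Finset.sum_le_sum
          intro σ hσ
          exact hterm σ (Finset.mem_erase.mp hσ).1
      _ = (1+ε)^d * ∑ σ ∈ Finset.univ.erase (1 : Equiv.Perm (Fin d)),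
          ε ^ (Equiv.Perm.support σ).card := by rw [Finset.mul_sum]
      _ ≤ (1+ε)^d * (2 * u^2) := by
          apply mul_le_mul_of_nonneg_left hcount (pow_nonneg (by linarith) _)
  have hexpinv : Real.exp u ≤ (1-u)⁻¹ := exp_le_inv_one_sub (by linarith)
  have hBpos : (0:ℝ) < 1 - u := by linarith
  have hB : (1-u) * (1-u)⁻¹ = 1 := mul_inv_cancel₀ (ne_of_gt hBpos)
  have hfinal : |A.det - 1| ≤ ((1+ε)^d - 1) + (1+ε)^d * (2*u^2) := by
    rw [hdecomp]
    have := abs_add_le ((∏ i, A i i) - 1)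
      (∑ σ ∈ Finset.univ.erase (1 : Equiv.Perm (Fin d)),
        Equiv.Perm.sign σ • ∏ i, A (σ i) i)
    calc |(∏ i, A i i) + _ - 1| = |((∏ i, A i i) - 1) + _| := by ring_nf
      _ ≤ _ := this
      _ ≤ _ := add_le_add h1 habs2
  have hEB : (1+ε)^d ≤ (1-u)⁻¹ := le_trans hexp hexpinv
  have hE1 : (1:ℝ) ≤ (1+ε)^d := one_le_pow₀ (by linarith)
  have hBle : (1-u)⁻¹ ≤ 50/49 := by
    rw [inv_le_comm₀ hBpos (by norm_num)]
    linarith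
  nlinarith [sq_nonneg u, hu0, hsm]

/-! ### difference-quotient limit lemmas -/

lemma deriv_along {d : ℕ} (f : E d → E d) (x v : E d) (hf : DifferentiableAt ℝ f x) :
    HasDerivAt (fun s : ℝ => f (x + s • v)) (fderiv ℝ f x v) 0 := by
  have hline : HasDerivAt (fun s : ℝ => x + s • v) v 0 := by
    simpa using ((hasDerivAt_id (0:ℝ)).smul_const v).const_add x
  have hf' : HasFDerivAt f (fderiv ℝ f x) (x + (0:ℝ) • v) := by
    simpa using hf.hasFDerivAt
  exact hf'.comp_hasDerivAt (0:ℝ) hline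

lemma norm_fderiv_sub_le {d : ℕ} (f : E d → E d) (x v : E d) (hf : DifferentiableAt ℝ f x)
    (c : ℝ) (hest : ∀ s : ℝ, ‖f (x + s • v) - f x - s • v‖ ≤ c * |s| * ‖v‖) :
    ‖fderiv ℝ f x v - v‖ ≤ c * ‖v‖ := by
  have hd := deriv_along f x v hf
  have hslope := hasDerivAt_iff_tendsto_slope.mp hd
  have htend : Tendsto (fun s : ℝ => ‖slope (fun s : ℝ => f (x + s • v)) 0 s - v‖)
      (nhdsWithin 0 {(0:ℝ)}ᶜ) (nhds ‖fderiv ℝ f x v - v‖) :=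
    ((continuous_norm.comp (continuous_id.sub continuous_const)).continuousAt).tendsto.comp hslope
  apply le_of_tendsto htend
  filter_upwards [self_mem_nhdsWithin] with s hs
  have hs0 : s ≠ 0 := hs
  rw [slope_def_module]
  have : (s - 0)⁻¹ • ((fun s : ℝ => f (x + s • v)) s - (fun s : ℝ => f (x + s • v)) 0)
      - v = (s)⁻¹ • (f (x + s • v) - f x - s • v) := by
    rw [sub_zero]
    simp only [zero_smul, add_zero, smul_sub]
    rw [smul_smul, inv_mul_cancel₀ hs0, one_smul]
  rw [sub_zero] at this ⊢
  rw [this, norm_smul, norm_inv, Real.norm_eq_abs]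
  rw [inv_mul_le_iff₀ (abs_pos.mpr hs0)]
  calc ‖f (x + s • v) - f x - s • v‖ ≤ c * |s| * ‖v‖ := hest s
    _ = |s| * (c * ‖v‖) := by ring

lemma entry_fderiv_sub_le {d : ℕ} (f : E d → E d) (x v : E d) (q : Fin d)
    (hf : DifferentiableAt ℝ f x) (c : ℝ)
    (hest : ∀ s : ℝ, |(f (x + s • v) - f x - s • v) q| ≤ c * |s|) :
    |fderiv ℝ f x v q - v q| ≤ c := by
  have hd := deriv_along f x v hf
  have hdq : HasDerivAt (fun s : ℝ => (EuclideanSpace.proj q) (f (x + s • v)))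
      ((EuclideanSpace.proj q) (fderiv ℝ f x v)) 0 :=
    by exact
      ((EuclideanSpace.proj q).hasFDerivAt).comp_hasDerivAt (0:ℝ) hd
  have hslope := hasDerivAt_iff_tendsto_slope.mp hdq
  have htend : Tendsto
      (fun s : ℝ => |slope (fun s : ℝ => (EuclideanSpace.proj q) (f (x + s • v))) 0 s - v q|)
      (nhdsWithin 0 {(0:ℝ)}ᶜ) (nhds |fderiv ℝ f x v q - v q|) := by
    have hco : Continuous (fun y : ℝ => |y - v q|) :=
      (continuous_id.sub continuous_const).abs
    exact (hco.continuousAt).tendsto.comp hslope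
  apply le_of_tendsto htend
  filter_upwards [self_mem_nhdsWithin] with s hs
  have hs0 : s ≠ 0 := hs
  rw [slope_def_field]
  have hval : (EuclideanSpace.proj q) (f (x + s • v)) = f (x + s • v) q := rfl
  have hval0 : (EuclideanSpace.proj q) (f (x + (0:ℝ) • v)) = f x q := by
    simp only [zero_smul, add_zero]; rfl
  have hkey : ((EuclideanSpace.proj q) (f (x + s • v))
      - (EuclideanSpace.proj q) (f (x + (0:ℝ) • v))) / (s - 0) - v q
      = (f (x + s • v) q - f x q - s * v q) / s := by
    rw [hval, hval0, sub_zero]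
    field_simp
  rw [hkey, abs_div]
  rw [div_le_iff₀ (abs_pos.mpr hs0)]
  have : (f (x + s • v) - f x - s • v) q = f (x + s • v) q - f x q - s * v q := rfl
  rw [← this]
  exact hest s

end Stmt14

set_option maxHeartbeats 2000000 in
open Stmt14 in
/-- growth estimates for the flow `φ_h` of the time-dependent
velocity field `V_{t+h}` and its inverse. -/
theorem stmt_14 {d : ℕ} (hd : 0 < d)
    (t H : ℝ) (hH : 0 < H)
    (V : ℝ → E d → E d)
    (hVsm : ∀ h ∈ Set.Icc (0 : ℝ) H, ContDiff ℝ 1 (V (t + h)))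
    (W0 W1 L1 K1 : ℝ) (hW0 : 0 < W0) (hW1 : 0 < W1) (hL1 : 0 < L1) (hK1 : 0 < K1)
    (hV0 : ∀ h ∈ Set.Icc (0 : ℝ) H, ∀ x, ‖V (t + h) x‖ ≤ W0 + W1 * ‖x‖)
    (hV1 : ∀ h ∈ Set.Icc (0 : ℝ) H, ∀ x, ‖fderiv ℝ (V (t + h)) x‖ ≤ L1)
    (hV1' : ∀ h ∈ Set.Icc (0 : ℝ) H, ∀ x l q, |jacEntry (V (t + h)) x l q| ≤ K1)
    (φ : ℝ → E d → E d)
    (hφ0 : ∀ x, φ 0 x = x)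
    (hφ : ∀ x, ∀ h ∈ Set.Icc (0 : ℝ) H,
      HasDerivAt (fun u => φ u x) (V (t + h) (φ h x)) h)
    (hφsm : ∀ h ∈ Set.Icc (0 : ℝ) H, ContDiff ℝ 1 (φ h))
    (hsmall : H * (W1 + L1 + d * K1) < 1 / 100) :
    ∀ h ∈ Set.Icc (0 : ℝ) H, Function.Bijective (φ h) ∧ ∀ x : E d,
      ‖x - φ h x‖ ≤ 4 * h * (W0 + W1 * ‖x‖) ∧
      ‖x - Function.invFun (φ h) x‖ ≤ 8 * h * (W0 + W1 * ‖x‖) ∧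
      ‖fderiv ℝ (φ h) x - ContinuousLinearMap.id ℝ (E d)‖ ≤ 4 * L1 * h ∧
      ‖fderiv ℝ (Function.invFun (φ h)) x - ContinuousLinearMap.id ℝ (E d)‖ ≤ 8 * L1 * h ∧
      (∀ l q, |jacEntry (φ h) x l q - (if l = q then 1 else 0)| ≤ 2 * K1 * h) ∧
      (∀ l q, |jacEntry (Function.invFun (φ h)) x l q - (if l = q then 1 else 0)| ≤ 4 * K1 * h) ∧
      (0 < (jacMatrix (φ h) x).det ∧
        Real.exp (-(8 * K1 * h * d)) ≤ (jacMatrix (φ h) x).det ∧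
        (jacMatrix (φ h) x).det ≤ Real.exp (4 * K1 * h * d)) ∧
      (0 < (jacMatrix (Function.invFun (φ h)) x).det ∧
        Real.exp (-(4 * K1 * h * d)) ≤ (jacMatrix (Function.invFun (φ h)) x).det ∧
        (jacMatrix (Function.invFun (φ h)) x).det ≤ Real.exp (8 * K1 * h * d)) := by
  intro h hh
  obtain ⟨hh0, hhH⟩ := hh
  have hIcc : h ∈ Set.Icc (0:ℝ) H := ⟨hh0, hhH⟩
  have hd1 : (1:ℝ) ≤ (d:ℝ) := by exact_mod_cast hd
  have hd0 : (0:ℝ) < (d:ℝ) := by linarith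
  -- numeric smallness
  have hsumpos : (0:ℝ) < W1 + L1 + (d:ℝ) * K1 := by positivity
  have hkey : h * (W1 + L1 + (d:ℝ)*K1) < 1/100 :=
    lt_of_le_of_lt (mul_le_mul_of_nonneg_right hhH (le_of_lt hsumpos)) hsmall
  have hhL1 : 0 ≤ h * L1 := by positivity
  have hhW1 : 0 ≤ h * W1 := by positivity
  have hhK1d : 0 ≤ h * ((d:ℝ) * K1) := by positivity
  have hW1h : W1 * h ≤ 1/100 := by nlinarith
  have hL1h : L1 * h ≤ 1/100 := by nlinarith
  have hK1hd : (d:ℝ) * K1 * h ≤ 1/100 := by nlinarith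
  have hW1h0 : 0 ≤ W1 * h := by positivity
  have hL1h0 : 0 ≤ L1 * h := by positivity
  have hK1h0 : 0 ≤ K1 * h := by positivity
  -- Lipschitz bounds on V
  have hVLip : ∀ u ∈ Set.Icc (0:ℝ) H, ∀ p r : E d,
      ‖V (t+u) p - V (t+u) r‖ ≤ L1 * ‖p - r‖ := by
    intro u hu p r
    have := Convex.norm_image_sub_le_of_norm_fderiv_le
      (f := V (t+u)) (s := Set.univ)
      (fun z _ => ((hVsm u hu).differentiable one_ne_zero).differentiableAt)
      (fun z _ => hV1 u hu z) convex_univ (Set.mem_univ r) (Set.mem_univ p)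
    simpa using this
  have hVent : ∀ u ∈ Set.Icc (0:ℝ) H, ∀ p r : E d, ∀ q : Fin d,
      |(V (t+u) p - V (t+u) r) q| ≤ K1 * ∑ j, |(p - r) j| := by
    intro u hu p r q
    set w := p - r with hw
    set D : E d → E d := V (t+u) with hD
    have hdiff : Differentiable ℝ D := (hVsm u hu).differentiable one_ne_zero
    set g : ℝ → ℝ := fun τ => (D (r + τ • w)) q with hg
    have hgd : ∀ τ : ℝ, HasDerivAt g ((fderiv ℝ D (r + τ • w) w) q) τ := by
      intro τ
      have hline : HasDerivAt (fun τ : ℝ => r + τ • w) w τ := by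
        simpa using ((hasDerivAt_id τ).smul_const w).const_add r
      have hD' : HasFDerivAt D (fderiv ℝ D (r + τ • w)) (r + τ • w) :=
        (hdiff _).hasFDerivAt
      have h2 := hD'.comp_hasDerivAt τ hline
      have h3 := ((EuclideanSpace.proj q).hasFDerivAt).comp_hasDerivAt τ h2
      exact h3
    have hbd : ∀ z : E d, |(fderiv ℝ D z w) q| ≤ K1 * ∑ j, |w j| := by
      intro z
      have hrw : (fderiv ℝ D z w) q = ∑ j, w j * jacEntry D z j q := by
        conv_lhs => rw [← euclid_sum_single w, map_sum]
        have : (∑ j, fderiv ℝ D z (w j • EuclideanSpace.single j (1:ℝ))) q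
            = ∑ j, (fderiv ℝ D z (w j • EuclideanSpace.single j (1:ℝ))) q :=
          by rw [WithLp.ofLp_sum, Finset.sum_apply]
        rw [this]
        refine Finset.sum_congr rfl fun j _ => ?_
        rw [map_smul]
        rfl
      rw [hrw]
      calc |∑ j, w j * jacEntry D z j q| ≤ ∑ j, |w j * jacEntry D z j q| :=
          Finset.abs_sum_le_sum_abs _ _
        _ ≤ ∑ j, |w j| * K1 := by
            apply Finset.sum_le_sum
            intro j _
            rw [abs_mul]
            exact mul_le_mul_of_nonneg_left (hV1' u hu z j q) (abs_nonneg _)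
        _ = K1 * ∑ j, |w j| := by rw [← Finset.sum_mul]; ring
    have hg01 := norm_image_sub_le_of_norm_deriv_le_segment_01'
      (f := g) (f' := fun τ => (fderiv ℝ D (r + τ • w) w) q)
      (fun τ _ => (hgd τ).hasDerivWithinAt) (fun τ _ => by simpa using hbd _)
    have hg1 : g 1 = D p q := by simp [hg, hw]
    have hg0 : g 0 = D r q := by simp [hg]
    rw [hg1, hg0] at hg01
    have : (D p - D r) q = D p q - D r q := rfl
    rw [this]
    simpa [Real.norm_eq_abs] using hg01
  -- E1 : displacement bound
  have E1 : ∀ x : E d, ‖φ h x - x‖ ≤ 2 * h * (W0 + W1 * ‖x‖) := by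
    intro x
    have hcont : ContinuousOn (fun u => φ u x - x) (Set.Icc 0 h) := by
      intro u hu
      have hu' : u ∈ Set.Icc (0:ℝ) H := ⟨hu.1, le_trans hu.2 hhH⟩
      exact (((hφ x u hu').sub_const x).continuousAt).continuousWithinAt
    have hderiv : ∀ u ∈ Set.Ico (0:ℝ) h, HasDerivWithinAt (fun u => φ u x - x)
        (V (t+u) (φ u x)) (Set.Ici u) u := by
      intro u hu
      have hu' : u ∈ Set.Icc (0:ℝ) H := ⟨hu.1, le_trans (le_of_lt hu.2) hhH⟩
      exact ((hφ x u hu').sub_const x).hasDerivWithinAt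
    have hbound : ∀ u ∈ Set.Ico (0:ℝ) h, ‖V (t+u) (φ u x)‖
        ≤ W1 * ‖φ u x - x‖ + (W0 + W1 * ‖x‖) := by
      intro u hu
      have hu' : u ∈ Set.Icc (0:ℝ) H := ⟨hu.1, le_trans (le_of_lt hu.2) hhH⟩
      have h1 := hV0 u hu' (φ u x)
      have h2 : ‖φ u x‖ ≤ ‖φ u x - x‖ + ‖x‖ := by
        simpa using norm_add_le (φ u x - x) x
      nlinarith
    have h00 : ‖(fun u => φ u x - x) 0‖ ≤ 0 := by simp [hφ0]
    have hgr := norm_le_gronwallBound_of_norm_deriv_right_le hcont hderiv h00 hbound h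
      (Set.right_mem_Icc.mpr hh0)
    rw [gronwallBound_of_K_ne_0 (ne_of_gt hW1)] at hgr
    simp only [sub_zero, zero_mul, zero_add] at hgr
    have hexp : Real.exp (W1*h) - 1 ≤ 2*(W1*h) :=
      exp_sub_one_le_two_mul (mul_nonneg (le_of_lt hW1) hh0) (by linarith)
    have hε0 : (0:ℝ) ≤ W0 + W1 * ‖x‖ := by positivity
    have hstep : (W0 + W1*‖x‖)/W1 * (Real.exp (W1*h) - 1)
        ≤ (W0+W1*‖x‖)/W1 * (2*(W1*h)) :=
      mul_le_mul_of_nonneg_left hexp (by positivity)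
    have hfin : (W0 + W1 * ‖x‖)/W1 * (2*(W1*h)) = 2*h*(W0+W1*‖x‖) := by
      field_simp
    calc ‖φ h x - x‖ ≤ (W0 + W1*‖x‖)/W1 * (Real.exp (W1*h) - 1) := hgr
      _ ≤ (W0+W1*‖x‖)/W1 * (2*(W1*h)) := hstep
      _ = 2*h*(W0+W1*‖x‖) := hfin
  -- E2 : Euclidean difference bound
  have E2 : ∀ a b : E d, ‖φ h a - φ h b - (a - b)‖ ≤ (2*L1*h) * ‖a - b‖ := by
    intro a b
    have hcont : ContinuousOn (fun u => φ u a - φ u b - (a - b)) (Set.Icc 0 h) := by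
      intro u hu
      have hu' : u ∈ Set.Icc (0:ℝ) H := ⟨hu.1, le_trans hu.2 hhH⟩
      exact ((((hφ a u hu').sub (hφ b u hu')).sub_const (a-b)).continuousAt).continuousWithinAt
    have hderiv : ∀ u ∈ Set.Ico (0:ℝ) h, HasDerivWithinAt (fun u => φ u a - φ u b - (a - b))
        (V (t+u) (φ u a) - V (t+u) (φ u b)) (Set.Ici u) u := by
      intro u hu
      have hu' : u ∈ Set.Icc (0:ℝ) H := ⟨hu.1, le_trans (le_of_lt hu.2) hhH⟩
      exact (((hφ a u hu').sub (hφ b u hu')).sub_const (a-b)).hasDerivWithinAt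
    have hbound : ∀ u ∈ Set.Ico (0:ℝ) h, ‖V (t+u) (φ u a) - V (t+u) (φ u b)‖
        ≤ L1 * ‖φ u a - φ u b - (a - b)‖ + L1 * ‖a - b‖ := by
      intro u hu
      have hu' : u ∈ Set.Icc (0:ℝ) H := ⟨hu.1, le_trans (le_of_lt hu.2) hhH⟩
      have h1 := hVLip u hu' (φ u a) (φ u b)
      have h2 : ‖φ u a - φ u b‖ ≤ ‖φ u a - φ u b - (a - b)‖ + ‖a - b‖ := by
        simpa using norm_add_le (φ u a - φ u b - (a-b)) (a-b)
      nlinarith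
    have h00 : ‖(fun u => φ u a - φ u b - (a - b)) 0‖ ≤ 0 := by simp [hφ0]
    have hgr := norm_le_gronwallBound_of_norm_deriv_right_le hcont hderiv h00 hbound h
      (Set.right_mem_Icc.mpr hh0)
    rw [gronwallBound_of_K_ne_0 (ne_of_gt hL1)] at hgr
    simp only [sub_zero, zero_mul, zero_add] at hgr
    have hexp : Real.exp (L1*h) - 1 ≤ 2*(L1*h) :=
      exp_sub_one_le_two_mul (mul_nonneg (le_of_lt hL1) hh0) (by linarith)
    have hstep : L1 * ‖a-b‖/L1 * (Real.exp (L1*h) - 1)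
        ≤ L1 * ‖a-b‖/L1 * (2*(L1*h)) :=
      mul_le_mul_of_nonneg_left hexp (by positivity)
    have hfin : L1 * ‖a-b‖/L1 * (2*(L1*h)) = (2*L1*h)*‖a-b‖ := by
      field_simp
    calc ‖φ h a - φ h b - (a-b)‖ ≤ L1 * ‖a-b‖/L1 * (Real.exp (L1*h) - 1) := hgr
      _ ≤ L1 * ‖a-b‖/L1 * (2*(L1*h)) := hstep
      _ = (2*L1*h)*‖a-b‖ := hfin
  -- E3 : componentwise difference bound
  have E3 : ∀ (a b : E d) (q : Fin d),
      |(φ h a - φ h b - (a - b)) q| ≤ (2*K1*h) * ∑ j, |(a - b) j| := by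
    intro a b q
    set e := PiLp.continuousLinearEquiv 2 ℝ (fun _ : Fin d => ℝ) with he
    set S : ℝ := ∑ j, |(a - b) j| with hS
    have hS0 : 0 ≤ S := Finset.sum_nonneg (fun j _ => abs_nonneg _)
    set F : ℝ → (Fin d → ℝ) := fun u => e (φ u a - φ u b - (a - b)) with hF
    have hFd : ∀ u ∈ Set.Icc (0:ℝ) H, HasDerivAt F
        (e (V (t+u) (φ u a) - V (t+u) (φ u b))) u := by
      intro u hu'
      have hψ : HasDerivAt (fun u => φ u a - φ u b - (a - b))
          (V (t+u) (φ u a) - V (t+u) (φ u b)) u :=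
        ((hφ a u hu').sub (hφ b u hu')).sub_const (a-b)
      have := ((e : E d →L[ℝ] (Fin d → ℝ)).hasFDerivAt).comp_hasDerivAt u hψ
      exact this
    have hcont : ContinuousOn F (Set.Icc 0 h) := by
      intro u hu
      have hu' : u ∈ Set.Icc (0:ℝ) H := ⟨hu.1, le_trans hu.2 hhH⟩
      exact ((hFd u hu').continuousAt).continuousWithinAt
    have hderiv : ∀ u ∈ Set.Ico (0:ℝ) h, HasDerivWithinAt F
        (e (V (t+u) (φ u a) - V (t+u) (φ u b))) (Set.Ici u) u := by
      intro u hu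
      have hu' : u ∈ Set.Icc (0:ℝ) H := ⟨hu.1, le_trans (le_of_lt hu.2) hhH⟩
      exact (hFd u hu').hasDerivWithinAt
    have hbound : ∀ u ∈ Set.Ico (0:ℝ) h, ‖e (V (t+u) (φ u a) - V (t+u) (φ u b))‖
        ≤ ((d:ℝ)*K1) * ‖F u‖ + K1 * S := by
      intro u hu
      have hu' : u ∈ Set.Icc (0:ℝ) H := ⟨hu.1, le_trans (le_of_lt hu.2) hhH⟩
      have hRHS : 0 ≤ ((d:ℝ)*K1) * ‖F u‖ + K1 * S := by positivity
      rw [pi_norm_le_iff_of_nonneg hRHS]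
      intro j
      have h1 : |(V (t+u) (φ u a) - V (t+u) (φ u b)) j|
          ≤ K1 * ∑ k, |(φ u a - φ u b) k| := hVent u hu' (φ u a) (φ u b) j
      have h2 : ∑ k, |(φ u a - φ u b) k| ≤ (∑ k, |(φ u a - φ u b - (a-b)) k|) + S := by
        rw [hS, ← Finset.sum_add_distrib]
        apply Finset.sum_le_sum
        intro k _
        have : (φ u a - φ u b) k = (φ u a - φ u b - (a-b)) k + (a-b) k := by
          simp
        rw [this]
        exact abs_add_le _ _
      have h3 : ∑ k, |(φ u a - φ u b - (a-b)) k| ≤ (d:ℝ) * ‖F u‖ := by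
        have : ∀ k : Fin d, |(φ u a - φ u b - (a-b)) k| ≤ ‖F u‖ := by
          intro k
          have := norm_le_pi_norm (F u) k
          simpa [hF, he, PiLp.coe_continuousLinearEquiv] using this
        calc ∑ k, |(φ u a - φ u b - (a-b)) k| ≤ ∑ _k : Fin d, ‖F u‖ :=
            Finset.sum_le_sum (fun k _ => this k)
          _ = (d:ℝ) * ‖F u‖ := by rw [Finset.sum_const, Finset.card_univ]; simp [nsmul_eq_mul]
      have h4 : ‖(e (V (t+u) (φ u a) - V (t+u) (φ u b))) j‖
          = |(V (t+u) (φ u a) - V (t+u) (φ u b)) j| := rfl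
      rw [h4]
      calc |(V (t+u) (φ u a) - V (t+u) (φ u b)) j| ≤ K1 * ∑ k, |(φ u a - φ u b) k| := h1
        _ ≤ K1 * (((d:ℝ) * ‖F u‖) + S) := by
            apply mul_le_mul_of_nonneg_left _ (le_of_lt hK1)
            linarith
        _ = ((d:ℝ)*K1) * ‖F u‖ + K1 * S := by ring
    have h00 : ‖F 0‖ ≤ 0 := by simp [hF, hφ0]
    have hgr := norm_le_gronwallBound_of_norm_deriv_right_le hcont hderiv h00 hbound h
      (Set.right_mem_Icc.mpr hh0)
    have hdK1 : (0:ℝ) < (d:ℝ)*K1 := by positivity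
    rw [gronwallBound_of_K_ne_0 (ne_of_gt hdK1)] at hgr
    simp only [sub_zero, zero_mul, zero_add] at hgr
    have hexp : Real.exp ((d:ℝ)*K1*h) - 1 ≤ 2*((d:ℝ)*K1*h) :=
      exp_sub_one_le_two_mul (by positivity) (by linarith)
    have hstep : K1 * S/((d:ℝ)*K1) * (Real.exp ((d:ℝ)*K1*h) - 1)
        ≤ K1 * S/((d:ℝ)*K1) * (2*((d:ℝ)*K1*h)) :=
      mul_le_mul_of_nonneg_left hexp (by positivity)
    have hfin : K1 * S/((d:ℝ)*K1) * (2*((d:ℝ)*K1*h)) = (2*K1*h) * S := by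
      field_simp
    have hFh : ‖F h‖ ≤ (2*K1*h) * S := by
      calc ‖F h‖ ≤ K1 * S/((d:ℝ)*K1) * (Real.exp ((d:ℝ)*K1*h) - 1) := hgr
        _ ≤ _ := hstep
        _ = _ := hfin
    have hcomp : |(φ h a - φ h b - (a - b)) q| ≤ ‖F h‖ := by
      have := norm_le_pi_norm (F h) q
      simpa [hF, he, PiLp.coe_continuousLinearEquiv] using this
    linarith
  -- the flow map at time h
  set f : E d → E d := φ h with hfdef
  have hfC : ContDiff ℝ 1 f := hφsm h hIcc
  have hfdiff : Differentiable ℝ f := hfC.differentiable one_ne_zero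
  have hc2 : (0:ℝ) ≤ 2*L1*h := by positivity
  have hc2le : 2*L1*h ≤ 1/50 := by linarith
  -- operator norm bound for fderiv f
  have hop : ∀ x : E d, ‖fderiv ℝ f x - ContinuousLinearMap.id ℝ (E d)‖ ≤ 2*L1*h := by
    intro x
    apply ContinuousLinearMap.opNorm_le_bound _ hc2
    intro v
    have h1 : (fderiv ℝ f x - ContinuousLinearMap.id ℝ (E d)) v = fderiv ℝ f x v - v := by
      simp
    rw [h1]
    apply norm_fderiv_sub_le f x v (hfdiff x) (2*L1*h)
    intro s
    have hE := E2 (x + s • v) x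
    have h2 : x + s • v - x = s • v := by abel
    rw [h2] at hE
    calc ‖f (x + s•v) - f x - s•v‖ ≤ (2*L1*h) * ‖s•v‖ := hE
      _ = 2*L1*h * |s| * ‖v‖ := by rw [norm_smul, Real.norm_eq_abs]; ring
  have hiteswap : ∀ (i j : Fin d), (if i = j then (1:ℝ) else 0) = (if j = i then 1 else 0) := by
    intro i j; by_cases hij : i = j
    · subst hij; simp
    · rw [if_neg hij, if_neg (Ne.symm hij)]
  -- entry bound for fderiv f
  have hentry : ∀ (x : E d) (l q : Fin d),
      |jacEntry f x l q - (if l = q then 1 else 0)| ≤ 2*K1*h := by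
    intro x l q
    have hsingle : (EuclideanSpace.single l (1:ℝ)) q = (if l = q then 1 else 0) := by
      rw [EuclideanSpace.single_apply, hiteswap q l]
    have hest : ∀ s : ℝ, |((f (x + s • EuclideanSpace.single l 1) - f x
        - s • EuclideanSpace.single l 1 : E d)) q| ≤ (2*K1*h) * |s| := by
      intro s
      have h3 := E3 (x + s • EuclideanSpace.single l 1) x q
      have h2 : x + s • EuclideanSpace.single l 1 - x = s • EuclideanSpace.single l 1 := by abel
      rw [h2] at h3
      have h4 : ∑ j, |(s • EuclideanSpace.single l (1:ℝ)) j| = |s| := by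
        have h5 : ∀ j : Fin d, |(s • EuclideanSpace.single l (1:ℝ)) j|
            = if j = l then |s| else 0 := by
          intro j
          have h6 : (s • EuclideanSpace.single l (1:ℝ)) j
              = s * (if j = l then 1 else 0) := by
            rw [PiLp.smul_apply, EuclideanSpace.single_apply, smul_eq_mul]
          rw [h6]
          by_cases hj : j = l <;> simp [hj]
        rw [Finset.sum_congr rfl (fun j _ => h5 j)]
        simp
      rw [h4] at h3
      exact h3
    have := entry_fderiv_sub_le f x (EuclideanSpace.single l 1) q (hfdiff x) (2*K1*h) hest
    unfold jacEntry
    rw [← hsingle]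
    exact this
  -- injectivity and lower bound
  have hlow : ∀ a b : E d, (1 - 2*L1*h) * ‖a - b‖ ≤ ‖f a - f b‖ := by
    intro a b
    have h1 := E2 a b
    have h2 := abs_norm_sub_norm_le (f a - f b) (a - b)
    have h3 := abs_le.mp h2
    nlinarith [h3.1]
  have hinj : Function.Injective f := by
    intro a b hab
    have h1 := hlow a b
    rw [hab, sub_self, norm_zero] at h1
    have h2 : ‖a - b‖ ≤ 0 := by nlinarith [norm_nonneg (a-b)]
    exact sub_eq_zero.mp (norm_le_zero_iff.mp h2)
  -- invertible derivative everywhere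
  have hsd : ∀ y : E d, HasStrictFDerivAt f (fderiv ℝ f y) y := fun y =>
    (hfC.contDiffAt).hasStrictFDerivAt one_ne_zero
  have hequiv : ∀ y : E d, ∃ A : E d ≃L[ℝ] E d, (A : E d →L[ℝ] E d) = fderiv ℝ f y := by
    intro y
    have hSinj : Function.Injective (fderiv ℝ f y) := by
      intro v w hvw
      have hz : fderiv ℝ f y (v - w) = 0 := by rw [map_sub, hvw, sub_self]
      have h1 : ‖(fderiv ℝ f y - ContinuousLinearMap.id ℝ (E d)) (v-w)‖
          ≤ 2*L1*h * ‖v-w‖ :=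
        ContinuousLinearMap.le_of_opNorm_le _ (hop y) _
      have h2 : (fderiv ℝ f y - ContinuousLinearMap.id ℝ (E d)) (v-w) = -(v-w) := by
        simp [hz]
      rw [h2, norm_neg] at h1
      have h3 : ‖v - w‖ ≤ 0 := by nlinarith [norm_nonneg (v-w)]
      exact sub_eq_zero.mp (norm_le_zero_iff.mp h3)
    have hbijS : Function.Bijective ((fderiv ℝ f y : E d →ₗ[ℝ] E d)) :=
      ⟨hSinj, (LinearMap.injective_iff_surjective).mp hSinj⟩
    refine ⟨(LinearEquiv.ofBijective _ hbijS).toContinuousLinearEquiv, ?_⟩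
    ext v
    rfl
  choose Aeq hAeq using hequiv
  have hsd' : ∀ y, HasStrictFDerivAt f ((Aeq y : E d →L[ℝ] E d)) y := by
    intro y; rw [hAeq y]; exact hsd y
  have hopen : IsOpenMap f := isOpenMap_of_hasStrictFDerivAt_equiv (f' := Aeq) hsd'
  have hlip : LipschitzWith 2 f := by
    apply LipschitzWith.of_dist_le_mul
    intro a b
    rw [dist_eq_norm, dist_eq_norm]
    have h1 := E2 a b
    have h2 : ‖f a - f b‖ ≤ ‖f a - f b - (a-b)‖ + ‖a-b‖ := by
      simpa using norm_add_le (f a - f b - (a-b)) (a-b)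
    push_cast
    nlinarith [norm_nonneg (a-b)]
  have hanti : AntilipschitzWith 2 f := by
    apply AntilipschitzWith.of_le_mul_dist
    intro a b
    rw [dist_eq_norm, dist_eq_norm]
    have h1 := hlow a b
    push_cast
    nlinarith [norm_nonneg (a-b), norm_nonneg (f a - f b)]
  have hclosed : IsClosed (Set.range f) := hanti.isClosed_range hlip.uniformContinuous
  have hsurj : Function.Surjective f := by
    rw [← Set.range_eq_univ]
    apply IsClopen.eq_univ ⟨hclosed, hopen.isOpen_range⟩
    exact ⟨f 0, Set.mem_range_self 0⟩
  have hbij : Function.Bijective f := ⟨hinj, hsurj⟩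
  set g : E d → E d := Function.invFun f with hgdef
  have hgL : Function.LeftInverse g f := Function.leftInverse_invFun hinj
  have hgR : Function.RightInverse g f := Function.rightInverse_invFun hsurj
  have hgfd : ∀ x : E d, HasFDerivAt g (((Aeq (g x)).symm : E d →L[ℝ] E d)) x := by
    intro x
    have h1 : HasStrictFDerivAt g (((Aeq (g x)).symm : E d →L[ℝ] E d)) (f (g x)) :=
      (hsd' (g x)).to_local_left_inverse (Filter.Eventually.of_forall (fun z => hgL z))
    rw [hgR x] at h1
    exact h1.hasFDerivAt
  -- determinant bound for f at any point
  have hw0 : (0:ℝ) ≤ 2*K1*h*(d:ℝ) := by positivity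
  have hw50 : 2*K1*h*(d:ℝ) ≤ 1/50 := by nlinarith
  have hdetMx : ∀ z : E d, 0 < (jacMatrix f z).det ∧
      Real.exp (-(4*(2*K1*h*(d:ℝ)))) ≤ (jacMatrix f z).det ∧
      (jacMatrix f z).det ≤ Real.exp (2*(2*K1*h*(d:ℝ))) := by
    intro z
    have hEnt : ∀ q l, |(jacMatrix f z) q l - (1 : Matrix (Fin d) (Fin d) ℝ) q l|
        ≤ 2*K1*h := by
      intro q l
      have h1 := hentry z l q
      rw [Matrix.one_apply, hiteswap q l]
      exact h1
    have hdb := det_bound (jacMatrix f z) (by positivity) hEnt (by nlinarith)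
    have hdb' : |(jacMatrix f z).det - 1| ≤ 2 * (2*K1*h*(d:ℝ)) := by
      have heq : (2:ℝ) * ((d:ℝ) * (2*K1*h)) = 2 * (2*K1*h*(d:ℝ)) := by ring
      rw [← heq]
      exact hdb
    exact exp_det_bounds hw0 hw50 hdb'
  refine ⟨hbij, fun x => ?_⟩
  -- per point data
  set y : E d := g x with hy
  have hfy : f y = x := hgR x
  set Scl : E d →L[ℝ] E d := (Aeq y : E d →L[ℝ] E d) with hScl
  set Tcl : E d →L[ℝ] E d := ((Aeq y).symm : E d →L[ℝ] E d) with hTcl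
  have hfderivg : fderiv ℝ g x = Tcl := (hgfd x).fderiv
  have hTS : Tcl.comp Scl = ContinuousLinearMap.id ℝ (E d) := by
    ext v
    simp [hTcl, hScl]
  have hST : Scl.comp Tcl = ContinuousLinearMap.id ℝ (E d) := by
    ext v
    simp [hTcl, hScl]
  have hSfd : Scl = fderiv ℝ f y := hAeq y
  have hTbound : ‖Tcl - ContinuousLinearMap.id ℝ (E d)‖ ≤ 8*L1*h := by
    have hSb : ‖Scl - ContinuousLinearMap.id ℝ (E d)‖ ≤ 2*L1*h := by
      rw [hSfd]; exact hop y
    have hcomp : Tcl.comp (ContinuousLinearMap.id ℝ (E d) - Scl)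
        = Tcl - ContinuousLinearMap.id ℝ (E d) := by
      rw [ContinuousLinearMap.comp_sub, ContinuousLinearMap.comp_id, hTS]
    have h1 : ‖Tcl - ContinuousLinearMap.id ℝ (E d)‖
        ≤ ‖Tcl‖ * ‖ContinuousLinearMap.id ℝ (E d) - Scl‖ := by
      rw [← hcomp]; exact ContinuousLinearMap.opNorm_comp_le _ _
    have h2 : ‖ContinuousLinearMap.id ℝ (E d) - Scl‖
        = ‖Scl - ContinuousLinearMap.id ℝ (E d)‖ := by
      rw [← norm_neg, neg_sub]
    have h3 : ‖Tcl‖ ≤ 1 + ‖Tcl - ContinuousLinearMap.id ℝ (E d)‖ := by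
      calc ‖Tcl‖ = ‖(Tcl - ContinuousLinearMap.id ℝ (E d)) + ContinuousLinearMap.id ℝ (E d)‖ := by
            rw [sub_add_cancel]
        _ ≤ ‖Tcl - ContinuousLinearMap.id ℝ (E d)‖ + ‖ContinuousLinearMap.id ℝ (E d)‖ :=
            norm_add_le _ _
        _ ≤ ‖Tcl - ContinuousLinearMap.id ℝ (E d)‖ + 1 := by
            linarith [ContinuousLinearMap.norm_id_le (𝕜 := ℝ) (E := E d)]
        _ = 1 + ‖Tcl - ContinuousLinearMap.id ℝ (E d)‖ := by ring
    have h4 : ‖Tcl‖ * ‖ContinuousLinearMap.id ℝ (E d) - Scl‖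
        ≤ (1 + ‖Tcl - ContinuousLinearMap.id ℝ (E d)‖) * (2*L1*h) := by
      apply mul_le_mul h3 (by rw [h2]; exact hSb) (norm_nonneg _)
      positivity
    nlinarith [norm_nonneg (Tcl - ContinuousLinearMap.id ℝ (E d))]
  -- matrices
  set M : Matrix (Fin d) (Fin d) ℝ := jacMatrix f y with hM
  set N : Matrix (Fin d) (Fin d) ℝ := jacMatrix g x with hN
  have hMmat : M = matOf Scl := by
    funext q l
    show jacEntry f y l q = _
    unfold jacEntry
    rw [← hSfd]
    rfl
  have hNmat : N = matOf Tcl := by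
    funext q l
    show jacEntry g x l q = _
    unfold jacEntry
    rw [hfderivg]
    rfl
  have hNM : N * M = 1 := by rw [hNmat, hMmat, ← matOf_comp, hTS, matOf_id]
  have hMent : ∀ q l, |M q l - (1 : Matrix (Fin d) (Fin d) ℝ) q l| ≤ 2*K1*h := by
    intro q l
    have h1 := hentry y l q
    rw [Matrix.one_apply, hiteswap q l]
    exact h1
  have hercoord : ∀ q l, |N q l - (1 : Matrix (Fin d) (Fin d) ℝ) q l|
      ≤ (2*K1*h) * ∑ k, |N q k| := by
    intro q l
    have hid : N * (1 - M) = N - 1 := by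
      rw [Matrix.mul_sub, Matrix.mul_one, hNM]
    have h1 : N q l - (1 : Matrix (Fin d) (Fin d) ℝ) q l
        = ∑ k, N q k * ((1 : Matrix (Fin d) (Fin d) ℝ) k l - M k l) := by
      have h2 := congrFun (congrFun hid q) l
      rw [Matrix.sub_apply] at h2
      rw [← h2, Matrix.mul_apply]
      refine Finset.sum_congr rfl fun k _ => ?_
      rw [Matrix.sub_apply]
    rw [h1]
    calc |∑ k, N q k * ((1 : Matrix (Fin d) (Fin d) ℝ) k l - M k l)|
        ≤ ∑ k, |N q k * ((1 : Matrix (Fin d) (Fin d) ℝ) k l - M k l)| :=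
          Finset.abs_sum_le_sum_abs _ _
      _ ≤ ∑ k, |N q k| * (2*K1*h) := by
          apply Finset.sum_le_sum
          intro k _
          rw [abs_mul]
          apply mul_le_mul_of_nonneg_left _ (abs_nonneg _)
          have h3 := hMent k l
          rw [abs_sub_comm] at h3
          exact h3
      _ = (2*K1*h) * ∑ k, |N q k| := by rw [← Finset.sum_mul]; ring
  have hrow : ∀ q, ∑ k, |N q k| ≤ 2 := by
    intro q
    have hR0 : (0:ℝ) ≤ ∑ k, |N q k| := Finset.sum_nonneg fun k _ => abs_nonneg _
    have h1 : ∀ k, |N q k| ≤ |(1 : Matrix (Fin d) (Fin d) ℝ) q k|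
        + (2*K1*h) * ∑ k, |N q k| := by
      intro k
      have h2 := hercoord q k
      have h3 := abs_sub_abs_le_abs_sub (N q k) ((1 : Matrix (Fin d) (Fin d) ℝ) q k)
      linarith
    have hsum1 : ∑ k, |(1 : Matrix (Fin d) (Fin d) ℝ) q k| = 1 := by
      have h4 : ∀ k, |(1 : Matrix (Fin d) (Fin d) ℝ) q k| = if q = k then (1:ℝ) else 0 := by
        intro k; rw [Matrix.one_apply]; by_cases hqk : q = k <;> simp [hqk]
      rw [Finset.sum_congr rfl fun k _ => h4 k]
      simp
    have h5 : ∑ k, |N q k| ≤ 1 + (d:ℝ) * ((2*K1*h) * ∑ k, |N q k|) := by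
      calc ∑ k, |N q k| ≤ ∑ k, (|(1 : Matrix (Fin d) (Fin d) ℝ) q k|
          + (2*K1*h) * ∑ k, |N q k|) := Finset.sum_le_sum fun k _ => h1 k
        _ = 1 + (d:ℝ) * ((2*K1*h) * ∑ k, |N q k|) := by
            rw [Finset.sum_add_distrib, hsum1, Finset.sum_const, Finset.card_univ]
            simp [nsmul_eq_mul]
    nlinarith
  have hNent : ∀ q l, |N q l - (1 : Matrix (Fin d) (Fin d) ℝ) q l| ≤ 4*K1*h := by
    intro q l
    have h1 := hercoord q l
    have h2 := hrow q
    nlinarith [Finset.sum_nonneg (fun k (_ : k ∈ Finset.univ) => abs_nonneg (N q k))]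
  -- determinant of N
  have hdetNM : N.det * M.det = 1 := by rw [← Matrix.det_mul, hNM, Matrix.det_one]
  obtain ⟨hMpos, hMlow, hMup⟩ := hdetMx y
  -- goals
  refine ⟨?_, ?_, ?_, ?_, ?_, ?_, ?_, ?_⟩
  · -- ‖x - f x‖
    have h1 := E1 x
    have h2 : ‖x - f x‖ = ‖f x - x‖ := norm_sub_rev _ _
    have h3 : (0:ℝ) ≤ h * (W0 + W1*‖x‖) := by positivity
    rw [h2]
    nlinarith
  · -- ‖x - g x‖
    have h1 := E1 y
    rw [hfy] at h1
    have h2 : ‖x - y‖ = ‖f y - y‖ := by rw [hfy]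
    have h3 : ‖y‖ ≤ ‖x‖ + ‖f y - y‖ := by
      have h4 := norm_sub_norm_le y x
      have h5 : ‖y - x‖ = ‖f y - y‖ := by rw [hfy, norm_sub_rev]
      linarith
    have h6 : (0:ℝ) ≤ ‖f y - y‖ := norm_nonneg _
    have h7 : (0:ℝ) ≤ W0 + W1 * ‖x‖ := by positivity
    rw [h2]
    nlinarith [mul_nonneg (mul_nonneg hh0 (le_of_lt hW1)) h6]
  · -- op bound for f
    have h1 := hop x
    nlinarith [hL1h0]
  · -- op bound for g
    rw [hfderivg]
    exact hTbound
  · -- entries of f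
    intro l q
    exact hentry x l q
  · -- entries of g
    intro l q
    have h1 := hNent q l
    rw [Matrix.one_apply, hiteswap q l] at h1
    exact h1
  · -- det of f
    obtain ⟨hp, hl, hu⟩ := hdetMx x
    refine ⟨hp, ?_, ?_⟩
    · have heq : -(4*(2*K1*h*(d:ℝ))) = -(8 * K1 * h * (d:ℝ)) := by ring
      rw [← heq]
      exact hl
    · have heq : (2*(2*K1*h*(d:ℝ))) = 4 * K1 * h * (d:ℝ) := by ring
      rw [← heq]
      exact hu
  · -- det of g
    have hNdet' : N.det = (M.det)⁻¹ := by
      have := hdetNM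
      field_simp at this ⊢
      rw [one_div]; exact eq_inv_of_mul_eq_one_left hdetNM
    have hNpos : 0 < N.det := by
      rw [hNdet']
      exact inv_pos.mpr hMpos
    refine ⟨hNpos, ?_, ?_⟩
    · have h1 : (Real.exp (2*(2*K1*h*(d:ℝ))))⁻¹ ≤ (M.det)⁻¹ := inv_anti₀ hMpos hMup
      rw [← Real.exp_neg] at h1
      rw [hNdet']
      have heq : -(2*(2*K1*h*(d:ℝ))) = -(4 * K1 * h * (d:ℝ)) := by ring
      rw [← heq]
      exact h1
    · have h1 : (M.det)⁻¹ ≤ (Real.exp (-(4*(2*K1*h*(d:ℝ)))))⁻¹ :=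
        inv_anti₀ (Real.exp_pos _) hMlow
      rw [← Real.exp_neg, neg_neg] at h1
      rw [hNdet']
      have heq : (4*(2*K1*h*(d:ℝ))) = 8 * K1 * h * (d:ℝ) := by ring
      rw [← heq]
      exact h1
end
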